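/- arXiv:2203.11863 — 7 statements merged into one kernel-verified Lean document; each statement's English description precedes it below -/
import Mathlib

section
/- If X is a real random variable with mean zero whose probability density function is bounded above by M > 0, then Var(X) ≥ 1/(12M²). -/
open MeasureTheory ProbabilityTheory Set

/-- If a real random variable `X` has mean zero and a probability density function bounded
above by `M > 0`, then `Var(X) ≥ 1/(12 M²)`. -/
theorem variance_lower_bound_of_bounded_density {Ω : Type*} [MeasurableSpace Ω]
    (P : Measure Ω) [IsProbabilityMeasure P] (X : Ω → ℝ) (hX : Measurable X)
    (f : ℝ → ℝ) (hf : ∀ t, 0 ≤ f t)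
    (hdens : P.map X = volume.withDensity (fun t => ENNReal.ofReal (f t)))
    (M : ℝ) (hM : 0 < M) (hbdd : ∀ t, f t ≤ M)
    (hL2 : MemLp X 2 P) (hmean : ∫ ω, X ω ∂P = 0) :
    1 / (12 * M ^ 2) ≤ variance X P := by
  haveI : IsProbabilityMeasure (P.map X) := Measure.isProbabilityMeasure_map hX.aemeasurable
  -- key set-measure bound
  have hkey : ∀ s : Set ℝ, MeasurableSet s → (P.map X) s ≤ ENNReal.ofReal M * volume s := by
    intro s hs
    rw [hdens, withDensity_apply _ hs]
    calc ∫⁻ t in s, ENNReal.ofReal (f t) ∂volume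
        ≤ ∫⁻ _ in s, ENNReal.ofReal M ∂volume :=
          lintegral_mono fun t => ENNReal.ofReal_le_ofReal (hbdd t)
      _ = ENNReal.ofReal M * volume s := by rw [setLIntegral_const]
  set b : ℝ := 1 / (4 * M ^ 2) with hbdef
  have hb : 0 < b := by positivity
  have hsqrtb : Real.sqrt b = 1 / (2 * M) := by
    have hb' : b = (1 / (2 * M)) ^ 2 := by rw [hbdef]; field_simp; ring
    rw [hb', Real.sqrt_sq (by positivity)]
  -- tail bound
  have htail : ∀ t ∈ Ioo (0 : ℝ) b,
      ENNReal.ofReal (1 - 2 * M * Real.sqrt t) ≤ (P.map X) {x : ℝ | t < x ^ 2} := by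
    intro t ht
    have hts : {x : ℝ | x ^ 2 ≤ t} = Icc (-(Real.sqrt t)) (Real.sqrt t) := by
      ext x
      simp only [mem_setOf_eq, mem_Icc]
      constructor
      · intro h
        have h1 := Real.sqrt_le_sqrt h
        rw [Real.sqrt_sq_eq_abs] at h1
        exact abs_le.mp h1
      · intro h
        have h2 := abs_le.mpr h
        calc x ^ 2 = |x| ^ 2 := (sq_abs x).symm
          _ ≤ Real.sqrt t ^ 2 := by nlinarith [abs_nonneg x]
          _ = t := Real.sq_sqrt ht.1.le
    have hcompl : {x : ℝ | t < x ^ 2} = {x : ℝ | x ^ 2 ≤ t}ᶜ := by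
      ext x; simp [not_le]
    have hmeas : MeasurableSet {x : ℝ | x ^ 2 ≤ t} := by
      rw [hts]; exact measurableSet_Icc
    have hm : (P.map X) {x : ℝ | x ^ 2 ≤ t} ≤ ENNReal.ofReal (2 * M * Real.sqrt t) := by
      rw [hts]
      refine (hkey _ measurableSet_Icc).trans ?_
      rw [Real.volume_Icc, ← ENNReal.ofReal_mul hM.le]
      exact ENNReal.ofReal_le_ofReal (by ring_nf; nlinarith [Real.sqrt_nonneg t])
    rw [hcompl, measure_compl hmeas (measure_ne_top (P.map X) _), measure_univ]
    calc ENNReal.ofReal (1 - 2 * M * Real.sqrt t)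
        = ENNReal.ofReal 1 - ENNReal.ofReal (2 * M * Real.sqrt t) :=
          ENNReal.ofReal_sub _ (by positivity)
      _ ≤ 1 - (P.map X) {x : ℝ | x ^ 2 ≤ t} := by
          rw [ENNReal.ofReal_one]; exact tsub_le_tsub_left hm 1
  -- reduce variance to a lintegral
  have hvar : variance X P = ∫ ω, X ω ^ 2 ∂P := by
    rw [variance_eq_sub hL2, hmean]; simp [Pi.pow_apply]
  have hint_nonneg : 0 ≤ ∫ ω, X ω ^ 2 ∂P := integral_nonneg fun ω => sq_nonneg _
  rw [hvar, ← ENNReal.ofReal_le_ofReal_iff hint_nonneg,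
    ofReal_integral_eq_lintegral_ofReal hL2.integrable_sq (ae_of_all _ fun ω => sq_nonneg _)]
  have hmap : ∫⁻ ω, ENNReal.ofReal (X ω ^ 2) ∂P = ∫⁻ x, ENNReal.ofReal (x ^ 2) ∂(P.map X) :=
    (lintegral_map (ENNReal.measurable_ofReal.comp (measurable_id.pow_const 2)) hX).symm
  rw [hmap, lintegral_eq_lintegral_meas_lt (P.map X) (ae_of_all _ fun x => sq_nonneg x)
    (measurable_id.pow_const 2).aemeasurable]
  -- integrability of the comparison function
  have hcont : Continuous fun t : ℝ => 1 - 2 * M * Real.sqrt t :=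
    continuous_const.sub (continuous_const.mul Real.continuous_sqrt)
  have hg_int : IntegrableOn (fun t : ℝ => 1 - 2 * M * Real.sqrt t) (Ioo 0 b) volume :=
    ((hcont.intervalIntegrable 0 b).1.mono_set Ioo_subset_Ioc_self)
  have hg_nn : 0 ≤ᵐ[volume.restrict (Ioo 0 b)] fun t : ℝ => 1 - 2 * M * Real.sqrt t := by
    filter_upwards [ae_restrict_mem measurableSet_Ioo] with t ht
    simp only [Pi.zero_apply]
    have h1 : Real.sqrt t ≤ Real.sqrt b := Real.sqrt_le_sqrt ht.2.le
    rw [hsqrtb] at h1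
    have : 2 * M * Real.sqrt t ≤ 1 := by
      calc 2 * M * Real.sqrt t ≤ 2 * M * (1 / (2 * M)) := by nlinarith
        _ = 1 := by field_simp
    linarith
  -- value of the comparison integral
  have hval : ∫ t in Ioo (0 : ℝ) b, (1 - 2 * M * Real.sqrt t) = 1 / (12 * M ^ 2) := by
    rw [← integral_Ioc_eq_integral_Ioo, ← intervalIntegral.integral_of_le hb.le]
    have hsqrt_int : ∫ t in (0 : ℝ)..b, Real.sqrt t = b / (3 * M) := by
      simp only [Real.sqrt_eq_rpow]
      rw [integral_rpow (Or.inl (by norm_num))]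
      have h32 : (1 / (2 : ℝ)) + 1 = 3 / 2 := by norm_num
      rw [h32, Real.zero_rpow (by norm_num)]
      have : b ^ ((3 : ℝ) / 2) = b * Real.sqrt b := by
        have h3 : (3 : ℝ) / 2 = 1 + 1 / 2 := by norm_num
        rw [h3, Real.rpow_add hb, Real.rpow_one, Real.sqrt_eq_rpow]
      rw [this, hsqrtb]
      field_simp
      ring
    rw [intervalIntegral.integral_sub (f := fun _ => 1) (g := fun t => 2 * M * Real.sqrt t)
      intervalIntegrable_const
      ((continuous_const.mul Real.continuous_sqrt).intervalIntegrable 0 b),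
      intervalIntegral.integral_const,
      intervalIntegral.integral_const_mul, hsqrt_int]
    rw [hbdef]
    field_simp
    ring_nf
    rw [← mul_pow, mul_inv_cancel₀ hM.ne']; norm_num
  calc ENNReal.ofReal (1 / (12 * M ^ 2))
      = ∫⁻ t in Ioo (0 : ℝ) b, ENNReal.ofReal (1 - 2 * M * Real.sqrt t) := by
        rw [← hval, ofReal_integral_eq_lintegral_ofReal hg_int hg_nn]
    _ ≤ ∫⁻ t in Ioo (0 : ℝ) b, (P.map X) {x : ℝ | t < x ^ 2} := by
        refine lintegral_mono_ae ?_
        filter_upwards [ae_restrict_mem measurableSet_Ioo] with t ht using htail t ht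
    _ ≤ ∫⁻ t in Ioi (0 : ℝ), (P.map X) {x : ℝ | t < x ^ 2} :=
        lintegral_mono_set fun t ht => ht.1
end

section
/- Let X ∈ ℝ₊ be a nonnegative logconcave random variable with mean μ, and let λ < 1/μ. Then E[e^{λX}] ≤ 1/(1 - λμ). In particular, E[X²] ≤ 2μ². -/
open MeasureTheory

/-- A function `f : ℝ → ℝ` (a density) is logconcave. -/
def LogConcaveFn (f : ℝ → ℝ) : Prop :=
  ∀ x y t : ℝ, 0 ≤ t → t ≤ 1 → (f x) ^ t * (f y) ^ (1 - t) ≤ f (t * x + (1 - t) * y)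

open Real Set
open scoped NNReal ENNReal

-- measurability of a nonneg logconcave function
lemma logconcave_measurable {f : ℝ → ℝ} (hf : ∀ t, 0 ≤ f t) (hlc : LogConcaveFn f) :
    Measurable f := by
  apply measurable_of_Ioi
  intro c
  rcases lt_or_ge c 0 with hc | hc
  · have : f ⁻¹' Ioi c = univ := by
      ext x; simp only [mem_preimage, mem_Ioi, mem_univ, iff_true]
      exact lt_of_lt_of_le hc (hf x)
    rw [this]; exact MeasurableSet.univ
  · have hlevel : ∀ d : ℝ, 0 < d → OrdConnected {x : ℝ | d ≤ f x} := by
      intro d hd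
      constructor
      intro x hx y hy z hz
      rcases eq_or_lt_of_le (hz.1.trans hz.2) with hxy | hxy
      · have : z = x := le_antisymm (hxy ▸ hz.2) hz.1
        exact this ▸ hx
      · set t : ℝ := (y - z) / (y - x) with ht
        have h0t : 0 ≤ t := div_nonneg (by linarith [hz.2]) (by linarith)
        have ht1 : t ≤ 1 := by
          rw [div_le_one (by linarith)]; linarith [hz.1]
        have hzc : z = t * x + (1 - t) * y := by
          have hyx : y - x ≠ 0 := by intro h; linarith
          rw [ht, div_mul_eq_mul_div, one_sub_div hyx, div_mul_eq_mul_div, ← add_div,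
            eq_div_iff hyx]; ring
        have := hlc x y t h0t ht1
        rw [← hzc] at this
        refine le_trans ?_ this
        calc d = d ^ t * d ^ (1 - t) := by
              rw [← Real.rpow_add hd]; simp
          _ ≤ f x ^ t * f y ^ (1 - t) :=
              mul_le_mul (Real.rpow_le_rpow hd.le hx h0t)
                (Real.rpow_le_rpow hd.le hy (by linarith))
                (Real.rpow_nonneg hd.le _) (Real.rpow_nonneg (hf x) _)
        
    have : f ⁻¹' Ioi c = ⋃ n : ℕ, {x : ℝ | c + ((n:ℝ)+1)⁻¹ ≤ f x} := by
      ext x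
      simp only [mem_preimage, mem_Ioi, mem_iUnion, mem_setOf_eq]
      constructor
      · intro h
        obtain ⟨n, hn⟩ := exists_nat_one_div_lt (sub_pos.2 h)
        exact ⟨n, by rw [one_div] at hn; linarith⟩
      · rintro ⟨n, hn⟩
        have : (0:ℝ) < ((n:ℝ)+1)⁻¹ := by positivity
        linarith
    rw [this]
    refine MeasurableSet.iUnion fun n => ?_
    exact (hlevel _ (by positivity)).measurableSet

-- moments of the exponential
lemma exp_moment {b : ℝ} (hb : 0 < b) (n : ℕ) :
    IntegrableOn (fun x => x ^ n * exp (-(b * x))) (Ioi 0) ∧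
      ∫ x in Ioi 0, x ^ n * exp (-(b * x)) = (n).factorial / b ^ (n + 1) := by
  have hgam : IntegrableOn (fun x : ℝ => exp (-x) * x ^ ((n + 1 : ℝ) - 1)) (Ioi 0) :=
    Real.GammaIntegral_convergent (by positivity)
  have hEq : EqOn (fun x : ℝ => exp (-x) * x ^ ((n + 1 : ℝ) - 1))
      (fun x : ℝ => exp (-x) * x ^ n) (Ioi 0) := by
    intro x hx
    simp only
    rw [show (n + 1 : ℝ) - 1 = (n : ℝ) by ring, Real.rpow_natCast]
  have hgam' : IntegrableOn (fun x : ℝ => exp (-x) * x ^ n) (Ioi 0) :=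
    (integrableOn_congr_fun hEq measurableSet_Ioi).1 hgam
  have hval : ∫ x in Ioi 0, exp (-x) * x ^ n = (n).factorial := by
    rw [← setIntegral_congr_fun measurableSet_Ioi hEq]
    rw [← Real.Gamma_eq_integral (by positivity : (0:ℝ) < (n:ℝ) + 1)]
    exact_mod_cast Real.Gamma_nat_eq_factorial n
  constructor
  · have := (integrableOn_Ioi_comp_mul_left_iff (fun x : ℝ => exp (-x) * x ^ n) 0 hb).2
      (by rwa [mul_zero])
    refine (integrableOn_congr_fun ?_ measurableSet_Ioi).1 (this.const_mul ((b : ℝ) ^ n)⁻¹)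
    intro x hx
    simp only
    rw [mul_pow]
    have hbn : (b : ℝ) ^ n ≠ 0 := by positivity
    field_simp
  · have hsub := integral_comp_mul_left_Ioi (fun x : ℝ => exp (-x) * x ^ n) 0 hb
    rw [mul_zero, hval] at hsub
    have hlhs : (fun x : ℝ => exp (-(b * x)) * (b * x) ^ n)
        = fun x : ℝ => b ^ n * (x ^ n * exp (-(b * x))) := by
      funext x; rw [mul_pow]; ring
    rw [show (∫ x in Ioi 0, exp (-(b * x)) * (b * x) ^ n) =
        ∫ x in Ioi 0, b ^ n * (x ^ n * exp (-(b * x))) from by rw [← hlhs],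
      integral_const_mul, smul_eq_mul] at hsub
    have hbn : (b : ℝ) ^ n ≠ 0 := by positivity
    field_simp at hsub ⊢
    rw [pow_succ]
    nlinarith [hsub]

lemma chord_compare {φ f g : ℝ → ℝ} {p q : ℝ}
    (hp : 0 ≤ p) (hpq : p < q)
    (hφ : ConvexOn ℝ (Ici 0) φ) (hφ0 : ∀ x ∈ Ici (0:ℝ), 0 ≤ φ x) (hφm : Measurable φ)
    (hfm : Measurable f) (hgm : Measurable g)
    (hf0 : ∀ x, 0 ≤ f x) (hg0 : ∀ x, 0 ≤ g x)
    (hfi : IntegrableOn f (Ioi 0)) (hgi : IntegrableOn g (Ioi 0))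
    (hxf : IntegrableOn (fun x => x * f x) (Ioi 0))
    (hxg : IntegrableOn (fun x => x * g x) (Ioi 0))
    (hmass : ∫ x in Ioi 0, f x = ∫ x in Ioi 0, g x)
    (hmom : ∫ x in Ioi 0, x * f x = ∫ x in Ioi 0, x * g x)
    (hφg : IntegrableOn (fun x => φ x * g x) (Ioi 0))
    (hsign1 : ∀ x ∈ Ioo 0 p, f x ≤ g x)
    (hsign2 : ∀ x ∈ Ioo p q, g x ≤ f x)
    (hsign3 : ∀ x ∈ Ioi q, f x ≤ g x) :
    IntegrableOn (fun x => φ x * f x) (Ioi 0) ∧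
      ∫ x in Ioi 0, φ x * f x ≤ ∫ x in Ioi 0, φ x * g x := by
  have hq : 0 < q := lt_of_le_of_lt hp hpq
  have hqp : (0:ℝ) < q - p := by linarith
  set s : ℝ := (φ q - φ p) / (q - p) with hs
  set ℓ : ℝ → ℝ := fun x => φ p + s * (x - p) with hℓ
  have hpI : p ∈ Ici (0:ℝ) := hp
  have hqI : q ∈ Ici (0:ℝ) := hq.le
  -- chord bounds
  have hbelow : ∀ x : ℝ, 0 < x → x < p → ℓ x ≤ φ x := by
    intro x hx hxp
    have h := hφ.secant_mono hpI (le_of_lt hx) hqI (ne_of_lt hxp) (ne_of_gt hpq)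
      (le_of_lt (lt_trans hxp hpq))
    rw [← hs] at h
    have := (div_le_iff_of_neg (by linarith : x - p < 0)).1 h
    simp only [hℓ]; linarith
  have habove : ∀ x : ℝ, p ≤ x → x ≤ q → φ x ≤ ℓ x := by
    intro x hxp hxq
    rcases eq_or_lt_of_le hxp with h | h
    · simp [hℓ, ← h]
    · have hsec := hφ.secant_mono hpI (le_trans hp hxp) hqI (ne_of_gt h) (ne_of_gt hpq) hxq
      rw [← hs] at hsec
      have := (div_le_iff₀ (by linarith : (0:ℝ) < x - p)).1 hsec
      simp only [hℓ]; linarith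
  have hbelow2 : ∀ x : ℝ, q < x → ℓ x ≤ φ x := by
    intro x hxq
    have hsec := hφ.secant_mono hpI hqI (le_trans hp (le_of_lt (lt_trans hpq hxq)))
      (ne_of_gt hpq) (ne_of_gt (lt_trans hpq hxq)) (le_of_lt hxq)
    rw [← hs] at hsec
    have := (le_div_iff₀ (by linarith : (0:ℝ) < x - p)).1 hsec
    simp only [hℓ]; linarith
  -- pointwise inequality
  have hpt : ∀ x ∈ Ioi (0:ℝ), φ x * f x + ℓ x * g x ≤ φ x * g x + ℓ x * f x := by
    intro x hx
    simp only [mem_Ioi] at hx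
    have key : (φ x - ℓ x) * (f x - g x) ≤ 0 := by
      rcases lt_trichotomy x p with h1 | h1 | h1
      · have := hbelow x hx h1
        have := hsign1 x ⟨hx, h1⟩
        nlinarith
      · have hlx : ℓ x = φ x := by rw [h1]; simp [hℓ]
        rw [hlx]; simp
      · rcases lt_trichotomy x q with h2 | h2 | h2
        · have := habove x h1.le h2.le
          have := hsign2 x ⟨h1, h2⟩
          nlinarith
        · have hlx : ℓ x = φ x := by
            rw [h2]; simp only [hℓ, hs]; field_simp; ring
          rw [hlx]; simp
        · have := hbelow2 x h2
          have := hsign3 x h2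
          nlinarith
    nlinarith [key]
  -- integrability of φ * f
  set M : ℝ := max (φ 0) (φ q) with hM
  have hM0 : 0 ≤ M := le_trans (hφ0 0 (mem_Ici.2 le_rfl)) (le_max_left _ _)
  have hφle : ∀ x ∈ Icc (0:ℝ) q, φ x ≤ M := by
    intro x hx
    exact hφ.le_on_segment (le_refl (0:ℝ)) hqI (by rwa [segment_eq_Icc hq.le])
  have hint1 : IntegrableOn (fun x => φ x * f x) (Ioc 0 q) := by
    refine Integrable.mono' ((hfi.mono_set Ioc_subset_Ioi_self).const_mul M)
      ((hφm.mul hfm).aestronglyMeasurable) ?_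
    refine (ae_restrict_iff' measurableSet_Ioc).2 (ae_of_all _ fun x hx => ?_)
    have h1 : 0 ≤ φ x := hφ0 x hx.1.le
    have h2 : φ x ≤ M := hφle x ⟨hx.1.le, hx.2⟩
    rw [Real.norm_eq_abs, abs_of_nonneg (mul_nonneg h1 (hf0 x))]
    exact mul_le_mul_of_nonneg_right h2 (hf0 x)
  have hint2 : IntegrableOn (fun x => φ x * f x) (Ioi q) := by
    refine Integrable.mono' (hφg.mono_set (Ioi_subset_Ioi hq.le))
      ((hφm.mul hfm).aestronglyMeasurable) ?_
    refine (ae_restrict_iff' measurableSet_Ioi).2 (ae_of_all _ fun x hx => ?_)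
    have hx0 : (0:ℝ) < x := lt_trans hq hx
    have h1 : 0 ≤ φ x := hφ0 x hx0.le
    rw [Real.norm_eq_abs, abs_of_nonneg (mul_nonneg h1 (hf0 x))]
    exact mul_le_mul_of_nonneg_left (hsign3 x hx) h1
  have hint : IntegrableOn (fun x => φ x * f x) (Ioi 0) := by
    rw [← Ioc_union_Ioi_eq_Ioi hq.le]
    exact hint1.union hint2
  refine ⟨hint, ?_⟩
  -- integrability of ℓ * f and ℓ * g
  have hℓf_eq : (fun x => ℓ x * f x) = fun x => (φ p - s * p) * f x + s * (x * f x) := by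
    funext x; simp only [hℓ]; ring
  have hℓg_eq : (fun x => ℓ x * g x) = fun x => (φ p - s * p) * g x + s * (x * g x) := by
    funext x; simp only [hℓ]; ring
  have hℓf : IntegrableOn (fun x => ℓ x * f x) (Ioi 0) := by
    rw [hℓf_eq]; exact (hfi.const_mul _).add (hxf.const_mul _)
  have hℓg : IntegrableOn (fun x => ℓ x * g x) (Ioi 0) := by
    rw [hℓg_eq]; exact (hgi.const_mul _).add (hxg.const_mul _)
  have hℓeq : ∫ x in Ioi 0, ℓ x * f x = ∫ x in Ioi 0, ℓ x * g x := by
    rw [hℓf_eq, hℓg_eq,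
      integral_add (hfi.const_mul _) (hxf.const_mul _),
      integral_add (hgi.const_mul _) (hxg.const_mul _),
      integral_const_mul, integral_const_mul, integral_const_mul, integral_const_mul,
      hmass, hmom]
  have hmono := setIntegral_mono_on (hint.add hℓg) (hφg.add hℓf) measurableSet_Ioi hpt
  simp only [Pi.add_apply] at hmono
  rw [integral_add hint hℓg, integral_add hφg hℓf] at hmono
  linarith

-- funnel : if f = g a.e. on Ioi 0, conclusion holds with equality
lemma funnel {f g φ : ℝ → ℝ} (hfg : f =ᵐ[volume.restrict (Ioi 0)] g)
    (hφg : IntegrableOn (fun x => φ x * g x) (Ioi 0)) :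
    IntegrableOn (fun x => φ x * f x) (Ioi 0) ∧
      ∫ x in Ioi 0, φ x * f x ≤ ∫ x in Ioi 0, φ x * g x := by
  have h : (fun x => φ x * f x) =ᵐ[volume.restrict (Ioi 0)] fun x => φ x * g x :=
    hfg.mono fun x hx => by simp [hx]
  exact ⟨hφg.congr h.symm, le_of_eq (integral_congr_ae h)⟩

lemma ae_eq_of_le_int_eq {f g : ℝ → ℝ}
    (hfi : IntegrableOn f (Ioi 0)) (hgi : IntegrableOn g (Ioi 0))
    (hle : ∀ᵐ x ∂(volume.restrict (Ioi (0:ℝ))), f x ≤ g x)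
    (hint : ∫ x in Ioi 0, f x = ∫ x in Ioi 0, g x) :
    f =ᵐ[volume.restrict (Ioi 0)] g := by
  have hsub : Integrable (fun x => g x - f x) (volume.restrict (Ioi 0)) := hgi.sub hfi
  have hnn : 0 ≤ᵐ[volume.restrict (Ioi (0:ℝ))] fun x => g x - f x :=
    hle.mono fun x hx => by simpa using sub_nonneg.2 hx
  have hz : ∫ x in Ioi 0, (g x - f x) = 0 := by
    rw [integral_sub hgi hfi, hint, sub_self]
  have := (integral_eq_zero_iff_of_nonneg_ae hnn hsub).1 hz
  filter_upwards [this] with x hx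
  have : g x - f x = 0 := hx
  linarith

theorem compare_to_exp {f : ℝ → ℝ} (hfm : Measurable f) (hf0 : ∀ x, 0 ≤ f x)
    (hlc : LogConcaveFn f) {μ : ℝ} (hμ : 0 < μ)
    (hfi : IntegrableOn f (Ioi 0)) (hxfi : IntegrableOn (fun x => x * f x) (Ioi 0))
    (hgi : IntegrableOn (fun x => μ⁻¹ * exp (-(μ⁻¹ * x))) (Ioi 0))
    (hxgi : IntegrableOn (fun x => x * (μ⁻¹ * exp (-(μ⁻¹ * x)))) (Ioi 0))
    (hgmass : ∫ x in Ioi 0, μ⁻¹ * exp (-(μ⁻¹ * x)) = 1)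
    (hgmean : ∫ x in Ioi 0, x * (μ⁻¹ * exp (-(μ⁻¹ * x))) = μ)
    (hmass : ∫ x in Ioi 0, f x = 1) (hmean : ∫ x in Ioi 0, x * f x = μ)
    {φ : ℝ → ℝ} (hφ : ConvexOn ℝ (Ici 0) φ) (hφ0 : ∀ x ∈ Ici (0:ℝ), 0 ≤ φ x)
    (hφm : Measurable φ)
    (hφg : IntegrableOn (fun x => φ x * (μ⁻¹ * exp (-(μ⁻¹ * x)))) (Ioi 0)) :
    IntegrableOn (fun x => φ x * f x) (Ioi 0) ∧
      ∫ x in Ioi 0, φ x * f x ≤ ∫ x in Ioi 0, φ x * (μ⁻¹ * exp (-(μ⁻¹ * x))) := by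
  set g : ℝ → ℝ := fun x => μ⁻¹ * exp (-(μ⁻¹ * x)) with hg
  have hg0 : ∀ x, 0 < g x := fun x => by positivity
  have hgm : Measurable g := by fun_prop
  have hmass' : ∫ x in Ioi 0, f x = ∫ x in Ioi 0, g x := by rw [hmass, hgmass]
  have hmom' : ∫ x in Ioi 0, x * f x = ∫ x in Ioi 0, x * g x := by rw [hmean, hgmean]
  -- the crossing set
  set S : Set ℝ := {x | 0 < x ∧ g x ≤ f x} with hS
  -- S is order-connected
  have hord : ∀ x ∈ S, ∀ y ∈ S, ∀ z, x ≤ z → z ≤ y → z ∈ S := by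
    intro x hx y hy z hxz hzy
    have hz0 : 0 < z := lt_of_lt_of_le hx.1 hxz
    refine ⟨hz0, ?_⟩
    rcases eq_or_lt_of_le (hxz.trans hzy) with hxy | hxy
    · have : z = x := le_antisymm (hxy ▸ hzy) hxz
      exact this ▸ hx.2
    · set t : ℝ := (y - z) / (y - x) with ht
      have hyx : (0:ℝ) < y - x := by linarith
      have h0t : 0 ≤ t := div_nonneg (by linarith) hyx.le
      have ht1 : t ≤ 1 := by rw [div_le_one hyx]; linarith
      have hzc : z = t * x + (1 - t) * y := by
        have : y - x ≠ 0 := ne_of_gt hyx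
        rw [ht, div_mul_eq_mul_div, one_sub_div this, div_mul_eq_mul_div, ← add_div,
          eq_div_iff this]; ring
      have hkey := hlc x y t h0t ht1
      rw [← hzc] at hkey
      refine le_trans ?_ hkey
      have hgxy : g x ^ t * g y ^ (1 - t) = g z := by
        rw [hg]
        simp only
        rw [Real.mul_rpow (by positivity) (exp_pos _).le,
          Real.mul_rpow (by positivity) (exp_pos _).le,
          ← Real.exp_mul, ← Real.exp_mul]
        rw [show (μ⁻¹ : ℝ) ^ t * rexp (-(μ⁻¹ * x) * t) * (μ⁻¹ ^ (1 - t) * rexp (-(μ⁻¹ * y) * (1 - t)))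
            = (μ⁻¹ ^ t * μ⁻¹ ^ (1 - t)) * (rexp (-(μ⁻¹ * x) * t) * rexp (-(μ⁻¹ * y) * (1 - t))) from by ring]
        rw [← Real.rpow_add (by positivity), ← Real.exp_add,
          show t + (1 - t) = 1 by ring, Real.rpow_one]
        congr 1
        rw [hzc]; ring
      rw [← hgxy]
      exact mul_le_mul (Real.rpow_le_rpow (hg0 x).le hx.2 h0t)
        (Real.rpow_le_rpow (hg0 y).le hy.2 (by linarith))
        (Real.rpow_nonneg (hg0 y).le _) (Real.rpow_nonneg (hf0 x) _)
  have hbd_below : BddBelow S := ⟨0, fun x hx => hx.1.le⟩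
  have hsingleton : ∀ p : ℝ, (volume.restrict (Ioi (0:ℝ))) {p} = 0 := by
    intro p
    rw [Measure.restrict_apply (measurableSet_singleton p)]
    exact measure_mono_null inter_subset_left (measure_singleton p)
  have hnep : ∀ p : ℝ, ∀ᵐ x ∂(volume.restrict (Ioi (0:ℝ))), x ≠ p := by
    intro p
    have hset : {a : ℝ | ¬ a ≠ p} = {p} := by ext a; simp
    rw [ae_iff, hset]
    exact hsingleton p
  by_cases hne : S.Nonempty
  · by_cases hbdd : BddAbove S
    · set p := sInf S with hpdef
      set q := sSup S with hqdef
      have hp0 : 0 ≤ p := le_csInf hne fun x hx => hx.1.le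
      have hpq : p ≤ q := csInf_le_csSup hne hbd_below hbdd
      rcases eq_or_lt_of_le hpq with heq | hlt
      · -- degenerate single-point crossing : f ≤ g a.e.
        have hle : ∀ᵐ x ∂(volume.restrict (Ioi (0:ℝ))), f x ≤ g x := by
          filter_upwards [hnep p, ae_restrict_mem measurableSet_Ioi] with x hxp hx0
          by_contra hcon
          push_neg at hcon
          have hxS : x ∈ S := ⟨hx0, hcon.le⟩
          have h1 : p ≤ x := csInf_le hbd_below hxS
          have h2 : x ≤ q := le_csSup hbdd hxS
          exact hxp (le_antisymm (heq ▸ h2) h1)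
        exact funnel (ae_eq_of_le_int_eq hfi hgi hle hmass') hφg
      · refine chord_compare hp0 hlt hφ hφ0 hφm hfm hgm hf0 (fun x => (hg0 x).le)
          hfi hgi hxfi hxgi hmass' hmom' hφg ?_ ?_ ?_
        · intro x hx
          by_contra hcon
          push_neg at hcon
          have hxS : x ∈ S := ⟨hx.1, hcon.le⟩
          exact absurd (csInf_le hbd_below hxS) (not_le.2 hx.2)
        · intro x hx
          obtain ⟨s1, hs1, hs1x⟩ := (csInf_lt_iff hbd_below hne).1 hx.1
          obtain ⟨s2, hs2, hxs2⟩ := (lt_csSup_iff hbdd hne).1 hx.2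
          exact (hord s1 hs1 s2 hs2 x hs1x.le hxs2.le).2
        · intro x hx
          by_contra hcon
          push_neg at hcon
          have hxS : x ∈ S := ⟨lt_trans (lt_of_le_of_lt hp0 hlt) hx, hcon.le⟩
          exact absurd (le_csSup hbdd hxS) (not_le.2 hx)
    · -- S unbounded above : single crossing, forces f = g a.e.
      set p := sInf S with hpdef
      set h : ℝ → ℝ := fun x => (x - p) * (f x - g x) with hh
      have hnn : ∀ x ∈ Ioi (0:ℝ), 0 ≤ h x := by
        intro x hx0
        rw [mem_Ioi] at hx0
        rcases lt_trichotomy x p with h1 | h1 | h1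
        · have hxnS : x ∉ S := fun hxS => absurd (csInf_le hbd_below hxS) (not_le.2 h1)
          have : f x < g x := by
            by_contra hcon; push_neg at hcon
            exact hxnS ⟨hx0, hcon⟩
          have hxp : x - p < 0 := by linarith
          have hhx : h x = (x - p) * (f x - g x) := rfl
          nlinarith [hhx]
        · simp [hh, h1]
        · obtain ⟨s1, hs1, hs1x⟩ := (csInf_lt_iff hbd_below hne).1 h1
          obtain ⟨s2, hs2, hxs2⟩ := not_bddAbove_iff.1 hbdd x
          have hxS : x ∈ S := hord s1 hs1 s2 hs2 x hs1x.le hxs2.le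
          have := hxS.2
          have hhx : h x = (x - p) * (f x - g x) := rfl
          nlinarith [hhx]
      have i1 : Integrable (fun x : ℝ => x * f x - p * f x) (volume.restrict (Ioi (0:ℝ))) :=
        hxfi.sub (hfi.const_mul p)
      have i2 : Integrable (fun x : ℝ => x * f x - p * f x - x * g x)
          (volume.restrict (Ioi (0:ℝ))) := i1.sub hxgi
      have i3 : Integrable (fun x : ℝ => p * g x) (volume.restrict (Ioi (0:ℝ))) :=
        hgi.const_mul p
      have hinth : Integrable h (volume.restrict (Ioi (0:ℝ))) := by
        have base : Integrable
            (fun x => (x * f x - p * f x - x * g x) + p * g x) (volume.restrict (Ioi (0:ℝ))) :=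
          i2.add i3
        exact base.congr (ae_of_all _ fun x => by simp only [hh]; ring)
      have hz : ∫ x in Ioi 0, h x = 0 := by
        have hrw : ∀ x : ℝ, h x = (x * f x - p * f x - x * g x) + p * g x := fun x => by
          simp only [hh]; ring
        rw [integral_congr_ae (ae_of_all _ hrw),
          integral_add i2 i3,
          integral_sub i1 hxgi,
          integral_sub hxfi (hfi.const_mul p),
          integral_const_mul, integral_const_mul, hmass, hmean, hgmass, hgmean]
        ring
      have hae0 : h =ᵐ[volume.restrict (Ioi (0:ℝ))] 0 :=
        (integral_eq_zero_iff_of_nonneg_ae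
          ((ae_restrict_iff' measurableSet_Ioi).2 (ae_of_all _ hnn)) hinth).1 hz
      have hfg : f =ᵐ[volume.restrict (Ioi (0:ℝ))] g := by
        filter_upwards [hae0, hnep p] with x hx hxp
        have : (x - p) * (f x - g x) = 0 := hx
        rcases mul_eq_zero.1 this with h1 | h1
        · exact absurd (by linarith : x = p) hxp
        · linarith
      exact funnel hfg hφg
  · -- S empty : f < g on Ioi 0
    have hle : ∀ᵐ x ∂(volume.restrict (Ioi (0:ℝ))), f x ≤ g x := by
      refine (ae_restrict_iff' measurableSet_Ioi).2 (ae_of_all _ fun x hx0 => ?_)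
      by_contra hcon
      push_neg at hcon
      exact hne ⟨x, hx0, hcon.le⟩
    exact funnel (ae_eq_of_le_int_eq hfi hgi hle hmass') hφg

/-- If `X ≥ 0` is a nonnegative logconcave random variable with mean `μ > 0`, then for any
`λ < 1/μ` we have `E[exp (λ X)] ≤ 1 / (1 - λ μ)`; in particular `E[X²] ≤ 2 μ²`. -/
theorem nonneg_logconcave_mgf_bound {Ω : Type*} [MeasurableSpace Ω] (ℙ : Measure Ω)
    [IsProbabilityMeasure ℙ] (X : Ω → ℝ) (hX : Measurable X)
    (hpos : ∀ᵐ ω ∂ℙ, 0 ≤ X ω)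
    (f : ℝ → ℝ) (hf : ∀ t, 0 ≤ f t) (hlc : LogConcaveFn f)
    (hdens : ℙ.map X = volume.withDensity (fun t => ENNReal.ofReal (f t)))
    (μ : ℝ) (hμ : 0 < μ) (hmean : ∫ ω, X ω ∂ℙ = μ) :
    (∀ l : ℝ, l < 1 / μ → ∫ ω, Real.exp (l * X ω) ∂ℙ ≤ 1 / (1 - l * μ)) ∧
      ∫ ω, (X ω) ^ 2 ∂ℙ ≤ 2 * μ ^ 2 := by
  have hfm : Measurable f := logconcave_measurable hf hlc
  set f' : ℝ → ℝ≥0 := fun t => (f t).toNNReal with hf'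
  have hf'm : Measurable f' := hfm.real_toNNReal
  have hdens' : ℙ.map X = volume.withDensity (fun t => (f' t : ℝ≥0∞)) := hdens
  -- f vanishes a.e. on the negative axis
  have hIio : ∀ᵐ x : ℝ ∂volume, x < 0 → f x = 0 := by
    have h1 : ℙ.map X (Iio 0) = 0 := by
      rw [Measure.map_apply hX measurableSet_Iio]
      have h2 : ℙ {ω | ¬ (0 ≤ X ω)} = 0 := ae_iff.1 hpos
      have h3 : X ⁻¹' Iio 0 = {ω | ¬ (0 ≤ X ω)} := by ext ω; simp [not_le]
      rw [h3]; exact h2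
    have h4 : ∫⁻ x in Iio 0, ENNReal.ofReal (f x) = 0 := by
      rw [← withDensity_apply _ measurableSet_Iio, ← hdens]; exact h1
    have h5 := (lintegral_eq_zero_iff hfm.ennreal_ofReal).1 h4
    have h6 := (ae_restrict_iff' measurableSet_Iio).1 h5
    filter_upwards [h6] with x hx hx0
    have := hx hx0
    simp only [Pi.zero_apply, ENNReal.ofReal_eq_zero] at this
    exact le_antisymm this (hf x)
  -- transfer of integrals from Ω to the density on (0, ∞)
  have key : ∀ ψ : ℝ → ℝ, Measurable ψ →
      (∫ ω, ψ (X ω) ∂ℙ = ∫ x in Ioi 0, f x * ψ x) ∧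
      (Integrable (fun ω => ψ (X ω)) ℙ ↔ IntegrableOn (fun x => f x * ψ x) (Ioi 0)) := by
    intro ψ hψ
    have e1 : ∫ ω, ψ (X ω) ∂ℙ = ∫ y, ψ y ∂(ℙ.map X) :=
      (integral_map hX.aemeasurable hψ.aestronglyMeasurable).symm
    have e2 : ∫ y, ψ y ∂(ℙ.map X) = ∫ x, f' x • ψ x ∂volume := by
      rw [hdens', integral_withDensity_eq_integral_smul hf'm]
    have hsmul : ∀ x, f' x • ψ x = f x * ψ x := fun x => by
      simp [hf', NNReal.smul_def, Real.coe_toNNReal _ (hf x)]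
    have hne0 : ∀ᵐ x : ℝ ∂volume, x ≠ 0 := by
      have hset : {a : ℝ | ¬ a ≠ 0} = {0} := by ext a; simp
      rw [ae_iff, hset]; exact measure_singleton 0
    have hind : (fun x => f x * ψ x) =ᵐ[volume] (Ioi 0).indicator (fun x => f x * ψ x) := by
      filter_upwards [hIio, hne0] with x hx hx0
      rcases lt_trichotomy x 0 with h | h | h
      · rw [indicator_of_notMem (by simp [not_lt]; linarith : x ∉ Ioi (0:ℝ))]
        simp [hx h]
      · exact absurd h hx0
      · rw [indicator_of_mem (mem_Ioi.2 h)]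
    constructor
    · rw [e1, e2, integral_congr_ae (ae_of_all _ hsmul), integral_congr_ae hind,
        integral_indicator measurableSet_Ioi]
    · rw [show (fun ω => ψ (X ω)) = ψ ∘ X from rfl,
        ← integrable_map_measure hψ.aestronglyMeasurable hX.aemeasurable, hdens',
        integrable_withDensity_iff_integrable_smul hf'm,
        integrable_congr (ae_of_all _ hsmul), integrable_congr hind,
        integrable_indicator_iff measurableSet_Ioi]
  -- basic integrability and moments of f
  have hXint : Integrable X ℙ := by
    by_contra hc
    rw [integral_undef hc] at hmean
    linarith
  have k1 := key (fun _ => (1:ℝ)) measurable_const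
  have kid := key (fun x => x) measurable_id
  have hmass0 : ∫ x in Ioi 0, f x * 1 = 1 := by
    rw [← k1.1]
    simp
  have hmass' : ∫ x in Ioi 0, f x = 1 := by
    rw [← hmass0]
    exact integral_congr_ae (ae_of_all _ fun x => (mul_one (f x)).symm)
  have hfi : IntegrableOn f (Ioi 0) := by
    have := k1.2.1 (integrable_const 1)
    exact this.congr (ae_of_all _ fun x => by simp)
  have hmean' : ∫ x in Ioi 0, x * f x = μ := by
    rw [show (∫ x in Ioi 0, x * f x) = ∫ x in Ioi 0, f x * x from
      integral_congr_ae (ae_of_all _ fun x => mul_comm x (f x)), ← kid.1, ← hmean]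
  have hxfi : IntegrableOn (fun x => x * f x) (Ioi 0) := by
    have := kid.2.1 hXint
    exact this.congr (ae_of_all _ fun x => mul_comm (f x) x)
  -- moments of the exponential density
  have hbμ : (0:ℝ) < μ⁻¹ := inv_pos.2 hμ
  have em0 := exp_moment hbμ 0
  have em1 := exp_moment hbμ 1
  have em2 := exp_moment hbμ 2
  have hgeq0 : (fun x : ℝ => μ⁻¹ * exp (-(μ⁻¹ * x)))
      = fun x => μ⁻¹ * (x ^ 0 * exp (-(μ⁻¹ * x))) := by funext x; simp
  have hgeq1 : (fun x : ℝ => x * (μ⁻¹ * exp (-(μ⁻¹ * x))))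
      = fun x => μ⁻¹ * (x ^ 1 * exp (-(μ⁻¹ * x))) := by funext x; ring
  have hgi : IntegrableOn (fun x : ℝ => μ⁻¹ * exp (-(μ⁻¹ * x))) (Ioi 0) := by
    rw [hgeq0]; exact em0.1.const_mul _
  have hxgi : IntegrableOn (fun x : ℝ => x * (μ⁻¹ * exp (-(μ⁻¹ * x)))) (Ioi 0) := by
    rw [hgeq1]; exact em1.1.const_mul _
  have hgmass : ∫ x in Ioi 0, μ⁻¹ * exp (-(μ⁻¹ * x)) = 1 := by
    rw [hgeq0, integral_const_mul, em0.2]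
    simp [Nat.factorial]
    field_simp
  have hgmean : ∫ x in Ioi 0, x * (μ⁻¹ * exp (-(μ⁻¹ * x))) = μ := by
    rw [hgeq1, integral_const_mul, em1.2]
    simp [Nat.factorial]
    field_simp
  constructor
  · -- MGF bound
    intro l hl
    have hb2 : (0:ℝ) < μ⁻¹ - l := by
      rw [one_div] at hl; linarith
    have h1lμ : (0:ℝ) < 1 - l * μ := by
      have h := mul_lt_mul_of_pos_right hl hμ
      rw [one_div, inv_mul_cancel₀ (ne_of_gt hμ)] at h
      linarith
    have emb := exp_moment hb2 0
    set φ : ℝ → ℝ := fun x => exp (l * x) with hφdef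
    have hφ : ConvexOn ℝ (Ici 0) φ := by
      refine ⟨convex_Ici 0, fun x _ y _ a b ha hb hab => ?_⟩
      have h := convexOn_exp.2 (Set.mem_univ (l * x)) (Set.mem_univ (l * y)) ha hb hab
      simpa [hφdef, smul_eq_mul, show l * (a * x + b * y) = a * (l * x) + b * (l * y) from
        by ring] using h
    have hφ0 : ∀ x ∈ Ici (0:ℝ), 0 ≤ φ x := fun x _ => (exp_pos _).le
    have hφm : Measurable φ := by fun_prop
    have hφgeq : (fun x : ℝ => φ x * (μ⁻¹ * exp (-(μ⁻¹ * x))))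
        = fun x => μ⁻¹ * (x ^ 0 * exp (-((μ⁻¹ - l) * x))) := by
      funext x
      rw [pow_zero, one_mul, show -((μ⁻¹ - l) * x) = l * x + -(μ⁻¹ * x) from by ring,
        Real.exp_add]
      simp only [hφdef]; ring
    have hφg : IntegrableOn (fun x : ℝ => φ x * (μ⁻¹ * exp (-(μ⁻¹ * x)))) (Ioi 0) := by
      rw [hφgeq]; exact emb.1.const_mul _
    have hφgval : ∫ x in Ioi 0, φ x * (μ⁻¹ * exp (-(μ⁻¹ * x))) = 1 / (1 - l * μ) := by
      rw [hφgeq, integral_const_mul, emb.2]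
      simp only [Nat.factorial, Nat.cast_one, pow_one, mul_one_div, zero_add, Nat.cast_ofNat,
        Nat.mul_one]
      rw [div_eq_div_iff (ne_of_gt hb2) (ne_of_gt h1lμ)]
      field_simp
    have hcomp := compare_to_exp hfm hf hlc hμ hfi hxfi hgi hxgi hgmass hgmean hmass' hmean'
      hφ hφ0 hφm hφg
    have hEeq : ∫ ω, exp (l * X ω) ∂ℙ = ∫ x in Ioi 0, f x * φ x := (key φ hφm).1
    rw [hEeq, show (∫ x in Ioi 0, f x * φ x) = ∫ x in Ioi 0, φ x * f x from
      integral_congr_ae (ae_of_all _ fun x => mul_comm (f x) (φ x)), ← hφgval]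
    exact hcomp.2
  · -- second moment bound
    set φ : ℝ → ℝ := fun x => x ^ 2 with hφdef
    have hφ : ConvexOn ℝ (Ici 0) φ :=
      (Even.convexOn_pow even_two).subset (subset_univ _) (convex_Ici 0)
    have hφ0 : ∀ x ∈ Ici (0:ℝ), 0 ≤ φ x := fun x _ => sq_nonneg x
    have hφm : Measurable φ := by fun_prop
    have hφgeq : (fun x : ℝ => φ x * (μ⁻¹ * exp (-(μ⁻¹ * x))))
        = fun x => μ⁻¹ * (x ^ 2 * exp (-(μ⁻¹ * x))) := by
      funext x; simp only [hφdef]; ring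
    have hφg : IntegrableOn (fun x : ℝ => φ x * (μ⁻¹ * exp (-(μ⁻¹ * x)))) (Ioi 0) := by
      rw [hφgeq]; exact em2.1.const_mul _
    have hφgval : ∫ x in Ioi 0, φ x * (μ⁻¹ * exp (-(μ⁻¹ * x))) = 2 * μ ^ 2 := by
      rw [hφgeq, integral_const_mul, em2.2]
      simp [Nat.factorial]
      field_simp
    have hcomp := compare_to_exp hfm hf hlc hμ hfi hxfi hgi hxgi hgmass hgmean hmass' hmean'
      hφ hφ0 hφm hφg
    have hEeq : ∫ ω, (X ω) ^ 2 ∂ℙ = ∫ x in Ioi 0, f x * φ x := (key φ hφm).1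
    rw [hEeq, show (∫ x in Ioi 0, f x * φ x) = ∫ x in Ioi 0, φ x * f x from
      integral_congr_ae (ae_of_all _ fun x => mul_comm (f x) (φ x)), ← hφgval]
    exact hcomp.2
end

section
/- Let X_1,...,X_n be independent nonnegative logconcave random variables each with mean μ. Then for ε > 0, Pr[∑ X_i ≥ (1+ε)μn] ≤ exp(−n(ε − ln(1+ε))). -/
open MeasureTheory ProbabilityTheory

namespace SumLC
open Real Set
open scoped ENNReal NNReal

/-- interpolation helper -/
lemma segment_bound {f : ℝ → ℝ} (hlc : LogConcaveFn f) {x y z : ℝ}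
    (hxy : x ≤ y) (hyz : y ≤ z) :
    ∃ t : ℝ, 0 ≤ t ∧ t ≤ 1 ∧ y = t * x + (1 - t) * z ∧
      f x ^ t * f z ^ (1 - t) ≤ f y := by
  rcases eq_or_lt_of_le (hxy.trans hyz) with h | h
  · have hx : y = x := le_antisymm (h ▸ hyz) hxy
    refine ⟨1, zero_le_one, le_refl 1, by simp [hx], ?_⟩
    have := hlc x z 1 zero_le_one le_rfl
    simpa [hx] using this
  · set t := (z - y) / (z - x) with ht
    have hzx : (0:ℝ) < z - x := by linarith
    have h0 : 0 ≤ t := div_nonneg (by linarith) hzx.le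
    have h1 : t ≤ 1 := by
      rw [ht, div_le_one hzx]; linarith
    have hy : y = t * x + (1 - t) * z := by
      have htz : t * (z - x) = z - y := by rw [ht]; exact div_mul_cancel₀ _ hzx.ne'
      linarith
    exact ⟨t, h0, h1, hy, hy ▸ hlc x z t h0 h1⟩

lemma superlevel_ordConnected {f : ℝ → ℝ} (hf : ∀ t, 0 ≤ f t) (hlc : LogConcaveFn f)
    {q : ℝ} (hq : 0 < q) : Set.OrdConnected {x : ℝ | q ≤ f x} := by
  constructor
  intro x hx z hz y hy
  obtain ⟨t, h0, h1, hy', hb⟩ := segment_bound hlc hy.1 hy.2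
  have h1' : (0:ℝ) ≤ 1 - t := by linarith
  have : q ^ t * q ^ (1 - t) ≤ f x ^ t * f z ^ (1 - t) :=
    mul_le_mul (Real.rpow_le_rpow hq.le hx h0) (Real.rpow_le_rpow hq.le hz h1')
      (Real.rpow_nonneg hq.le _) (Real.rpow_nonneg (hf x) _)
  have hq1 : q ^ t * q ^ (1 - t) = q := by
    rw [← Real.rpow_add hq]; norm_num
  simpa [hq1] using this.trans hb

lemma measurable_of_logconcave {f : ℝ → ℝ} (hf : ∀ t, 0 ≤ f t) (hlc : LogConcaveFn f) :
    Measurable f := by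
  apply measurable_of_Ioi
  intro c
  rcases lt_or_ge c 0 with hc | hc
  · have : f ⁻¹' Ioi c = Set.univ := by
      ext x; simp only [mem_preimage, mem_Ioi, mem_univ, iff_true]
      exact lt_of_lt_of_le hc (hf x)
    rw [this]; exact MeasurableSet.univ
  · have : f ⁻¹' Ioi c = ⋃ n : ℕ, {x : ℝ | c + (n + 1 : ℝ)⁻¹ ≤ f x} := by
      ext x
      simp only [mem_preimage, mem_Ioi, mem_iUnion, mem_setOf_eq]
      constructor
      · intro h
        obtain ⟨n, hn⟩ := exists_nat_one_div_lt (show (0:ℝ) < f x - c by linarith)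
        exact ⟨n, by rw [one_div] at hn; linarith⟩
      · rintro ⟨n, hn⟩
        have : (0:ℝ) < (n + 1 : ℝ)⁻¹ := by positivity
        linarith
    rw [this]
    refine MeasurableSet.iUnion fun n => ?_
    have hq : (0:ℝ) < c + (n + 1 : ℝ)⁻¹ := by positivity
    exact (superlevel_ordConnected hf hlc hq).measurableSet

lemma convexOn_exp_mul (lam : ℝ) : ConvexOn ℝ Set.univ (fun x => Real.exp (lam * x)) := by
  refine ⟨convex_univ, fun x _ y _ s t hs ht hst => ?_⟩
  have := convexOn_exp.2 (Set.mem_univ (lam * x)) (Set.mem_univ (lam * y)) hs ht hst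
  simp only [smul_eq_mul] at this ⊢
  convert this using 2
  ring

lemma chord_above {φ : ℝ → ℝ} (hφ : ConvexOn ℝ Set.univ φ) {a b : ℝ} (hab : a < b)
    {x : ℝ} (hax : a ≤ x) (hxb : x ≤ b) :
    φ x ≤ φ a + (φ b - φ a) / (b - a) * (x - a) := by
  have hba : (0:ℝ) < b - a := by linarith
  set t := (b - x) / (b - a) with ht
  have h0 : 0 ≤ t := div_nonneg (by linarith) hba.le
  have h1' : 0 ≤ 1 - t := by
    rw [ht]; rw [sub_nonneg, div_le_one hba]; linarith
  have hx : t • a + (1 - t) • b = x := by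
    simp only [smul_eq_mul, ht]
    field_simp
    ring
  have h2 := hφ.2 (Set.mem_univ a) (Set.mem_univ b) h0 h1' (by ring)
  rw [hx] at h2
  refine h2.trans (le_of_eq ?_)
  rw [ht]
  simp only [smul_eq_mul]
  field_simp
  ring

lemma chord_below {φ : ℝ → ℝ} (hφ : ConvexOn ℝ Set.univ φ) {a b : ℝ} (hab : a < b)
    {x : ℝ} (hx : x ≤ a ∨ b ≤ x) :
    φ a + (φ b - φ a) / (b - a) * (x - a) ≤ φ x := by
  have hba : (0:ℝ) < b - a := by linarith
  rcases hx with hx | hx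
  · rcases eq_or_lt_of_le hx with rfl | hx
    · simp
    · have h := hφ.slope_mono_adjacent (Set.mem_univ x) (Set.mem_univ b) hx hab
      rw [div_le_div_iff₀ (by linarith) hba] at h
      have h2 : (φ b - φ a) / (b - a) * (x - a) ≤ φ x - φ a := by
        rw [div_mul_eq_mul_div, div_le_iff₀ hba]; nlinarith [h]
      linarith
  · rcases eq_or_lt_of_le hx with he | hx
    · subst he
      have : (φ b - φ a) / (b - a) * (b - a) = φ b - φ a := by field_simp
      rw [this]; ring_nf; exact le_rfl
    · have h := hφ.slope_mono_adjacent (Set.mem_univ a) (Set.mem_univ x) hab hx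
      rw [div_le_div_iff₀ hba (by linarith)] at h
      have h2 : (φ b - φ a) / (b - a) * (x - a) ≤ φ x - φ a := by
        rw [div_mul_eq_mul_div, div_le_iff₀ hba]; nlinarith [h]
      linarith

noncomputable def gE (c : ℝ) : ℝ → ℝ :=
  Set.indicator (Ici 0) (fun x => c * Real.exp (-(c * x)))

lemma gE_nonneg {c : ℝ} (hc : 0 < c) (x : ℝ) : 0 ≤ gE c x := by
  unfold gE
  apply Set.indicator_nonneg
  intro y _
  positivity

lemma gE_of_nonneg {c x : ℝ} (hx : 0 ≤ x) : gE c x = c * Real.exp (-(c * x)) :=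
  Set.indicator_of_mem hx _

lemma gE_of_neg {c x : ℝ} (hx : x < 0) : gE c x = 0 :=
  Set.indicator_of_notMem (by simpa using hx) _

lemma measurable_gE (c : ℝ) : Measurable (gE c) := by
  unfold gE
  exact ((measurable_const.mul ((measurable_const.mul measurable_id').neg.exp)).indicator
    measurableSet_Ici)

lemma integrableOn_exp_neg_mul {c : ℝ} (hc : 0 < c) :
    IntegrableOn (fun x : ℝ => Real.exp (-(c * x))) (Ioi 0) := by
  have := exp_neg_integrableOn_Ioi 0 hc
  refine this.congr_fun (fun x _ => by simp only [neg_mul]) measurableSet_Ioi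

lemma integral_exp_neg_mul {c : ℝ} (hc : 0 < c) :
    ∫ x in Ioi 0, Real.exp (-(c * x)) = c⁻¹ := by
  have h := integral_rpow_mul_exp_neg_mul_Ioi (zero_lt_one) hc
  simp only [sub_self, Real.rpow_zero, one_mul, Real.Gamma_one, mul_one, one_div] at h
  rw [h, Real.rpow_one]

lemma integrableOn_id_mul_exp_neg_mul {c : ℝ} (hc : 0 < c) :
    IntegrableOn (fun x : ℝ => x * Real.exp (-(c * x))) (Ioi 0) := by
  have := integrableOn_rpow_mul_exp_neg_mul_rpow (p := 1) (s := 1)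
    (by norm_num) one_pos hc
  refine this.congr_fun (fun x _ => ?_) measurableSet_Ioi
  simp only [Real.rpow_one]
  rw [neg_mul]

lemma integral_id_mul_exp_neg_mul {c : ℝ} (hc : 0 < c) :
    ∫ x in Ioi 0, x * Real.exp (-(c * x)) = (c ^ 2)⁻¹ := by
  have h := integral_rpow_mul_exp_neg_mul_Ioi (by norm_num : (0:ℝ) < 2) hc
  norm_num [Real.Gamma_two] at h
  exact h

lemma integrable_gE {c : ℝ} (hc : 0 < c) : Integrable (gE c) := by
  unfold gE
  rw [integrable_indicator_iff measurableSet_Ici]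
  exact (integrableOn_Ici_iff_integrableOn_Ioi).mpr
    ((integrableOn_exp_neg_mul hc).const_mul c)

lemma integral_gE {c : ℝ} (hc : 0 < c) : ∫ x, gE c x = 1 := by
  unfold gE
  rw [integral_indicator measurableSet_Ici, integral_Ici_eq_integral_Ioi,
    integral_const_mul, integral_exp_neg_mul hc, mul_inv_cancel₀ hc.ne']

lemma id_mul_gE (c : ℝ) : (fun x => x * gE c x) =
    Set.indicator (Ici 0) (fun x => x * (c * Real.exp (-(c * x)))) := by
  funext x
  unfold gE
  by_cases hx : x ∈ Ici (0:ℝ)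
  · rw [Set.indicator_of_mem hx, Set.indicator_of_mem hx]
  · rw [Set.indicator_of_notMem hx, Set.indicator_of_notMem hx, mul_zero]

lemma integrable_id_mul_gE {c : ℝ} (hc : 0 < c) : Integrable (fun x => x * gE c x) := by
  rw [id_mul_gE, integrable_indicator_iff measurableSet_Ici]
  refine (integrableOn_Ici_iff_integrableOn_Ioi).mpr ?_
  exact (IntegrableOn.congr_fun ((integrableOn_id_mul_exp_neg_mul hc).const_mul c)
    (fun x _ => by ring) measurableSet_Ioi)

lemma integral_id_mul_gE {c : ℝ} (hc : 0 < c) : ∫ x, x * gE c x = c⁻¹ := by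
  rw [id_mul_gE, integral_indicator measurableSet_Ici, integral_Ici_eq_integral_Ioi]
  have : ∀ x ∈ Ioi (0:ℝ), x * (c * Real.exp (-(c * x))) = c * (x * Real.exp (-(c * x))) := by
    intro x _; ring
  rw [setIntegral_congr_fun measurableSet_Ioi this, integral_const_mul,
    integral_id_mul_exp_neg_mul hc]
  rw [sq]
  field_simp

lemma exp_mul_gE {c lam : ℝ} (hc : 0 < c) (hlc : lam < c) :
    (fun x => Real.exp (lam * x) * gE c x) = fun x => (c / (c - lam)) * gE (c - lam) x := by
  funext x
  rcases lt_or_ge x 0 with hx | hx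
  · rw [gE_of_neg hx, gE_of_neg hx, mul_zero, mul_zero]
  · rw [gE_of_nonneg hx, gE_of_nonneg hx]
    have hclam : c - lam ≠ 0 := by linarith [hlc]
    have h2 : c / (c - lam) * ((c - lam) * Real.exp (-((c - lam) * x)))
        = c * Real.exp (-((c - lam) * x)) := by field_simp
    rw [h2, show -((c - lam) * x) = lam * x + -(c * x) by ring, Real.exp_add]
    ring

lemma integrable_exp_mul_gE {c lam : ℝ} (hc : 0 < c) (hlc : lam < c) :
    Integrable (fun x => Real.exp (lam * x) * gE c x) := by
  rw [exp_mul_gE hc hlc]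
  exact (integrable_gE (by linarith)).const_mul _

lemma integral_exp_mul_gE {c lam : ℝ} (hc : 0 < c) (hlc : lam < c) :
    ∫ x, Real.exp (lam * x) * gE c x = c / (c - lam) := by
  rw [exp_mul_gE hc hlc, integral_const_mul, integral_gE (by linarith), mul_one]

lemma ae_ne_point (p : ℝ) : ∀ᵐ x : ℝ, x ≠ p := by
  rw [ae_iff]
  simpa using measure_singleton (α := ℝ) p

lemma core {f : ℝ → ℝ} {μ : ℝ} (hf0 : ∀ t, 0 ≤ f t) (hlc : LogConcaveFn f)
    (hmf : Measurable f)
    (hneg : ∀ᵐ x : ℝ, x < 0 → f x = 0)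
    (hfint : Integrable f) (h1 : ∫ x, f x = 1)
    (hxint : Integrable (fun x => x * f x)) (hxf : ∫ x, x * f x = μ)
    (hμ : 0 < μ) {lam : ℝ} (hl0 : 0 < lam) (hl1 : lam * μ < 1) :
    Integrable (fun x => Real.exp (lam * x) * f x) ∧
      ∫ x, Real.exp (lam * x) * f x ≤ (1 - lam * μ)⁻¹ := by
  have h1lam : 0 < 1 - lam * μ := by linarith
  set c := μ⁻¹ with hcdef
  have hc : 0 < c := inv_pos.mpr hμ
  have hlamc : lam < c := by
    have h2 : lam * μ < c * μ := by
      rw [hcdef, inv_mul_cancel₀ hμ.ne']; exact hl1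
    exact lt_of_mul_lt_mul_right h2 hμ.le
  set g := gE c with hg
  have hgint : Integrable g := integrable_gE hc
  have hgval : ∫ x, g x = 1 := integral_gE hc
  have hgxint : Integrable (fun x => x * g x) := integrable_id_mul_gE hc
  have hgxval : ∫ x, x * g x = μ := by rw [hg, integral_id_mul_gE hc, hcdef, inv_inv]
  have hgeint : Integrable (fun x => Real.exp (lam * x) * g x) := integrable_exp_mul_gE hc hlamc
  have hgeval : ∫ x, Real.exp (lam * x) * g x = (1 - lam * μ)⁻¹ := by
    rw [hg, integral_exp_mul_gE hc hlamc, hcdef]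
    rw [show μ⁻¹ - lam = (1 - lam * μ) * μ⁻¹ by field_simp]
    rw [div_mul_eq_div_div_swap, div_self (inv_ne_zero hμ.ne'), one_div]
  have hgnn : ∀ x, 0 ≤ g x := gE_nonneg hc
  set J := {x : ℝ | 0 ≤ x ∧ g x ≤ f x} with hJ
  have hJbb : BddBelow J := ⟨0, fun y hy => hy.1⟩
  have hJord : J.OrdConnected := by
    constructor
    rintro x ⟨hx0, hxf⟩ z ⟨hz0, hzf⟩ y hy
    have hy0 : (0:ℝ) ≤ y := hx0.trans hy.1
    refine ⟨hy0, ?_⟩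
    obtain ⟨t, h0, h1t, hy', hb⟩ := segment_bound hlc hy.1 hy.2
    have h1' : (0:ℝ) ≤ 1 - t := by linarith
    have hgxz : g x ^ t * g z ^ (1 - t) = g y := by
      rw [hg, gE_of_nonneg hx0, gE_of_nonneg hz0, gE_of_nonneg hy0,
        Real.mul_rpow hc.le (Real.exp_pos _).le, Real.mul_rpow hc.le (Real.exp_pos _).le,
        mul_mul_mul_comm, ← Real.rpow_add hc, show t + (1 - t) = 1 by ring, Real.rpow_one,
        ← Real.exp_mul, ← Real.exp_mul, ← Real.exp_add]
      congr 1
      rw [hy']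
      ring
    have hmono : g x ^ t * g z ^ (1 - t) ≤ f x ^ t * f z ^ (1 - t) :=
      mul_le_mul (Real.rpow_le_rpow (hgnn x) hxf h0)
        (Real.rpow_le_rpow (hgnn z) hzf h1') (Real.rpow_nonneg (hgnn z) _)
        (Real.rpow_nonneg (hf0 x) _)
    calc g y = g x ^ t * g z ^ (1 - t) := hgxz.symm
      _ ≤ f x ^ t * f z ^ (1 - t) := hmono
      _ ≤ f y := hb
  by_cases hJb : BddAbove J
  · -- bounded case
    obtain ⟨α, β, hin, hout⟩ :
        ∃ α β : ℝ, (∀ x ∈ J, Real.exp (lam * x) ≤ α + β * x) ∧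
          (∀ x, 0 ≤ x → x ∉ J →
            (α + β * x ≤ Real.exp (lam * x) ∨ x = sInf J ∨ x = sSup J)) := by
      rcases Set.eq_empty_or_nonempty J with hJe | hJne
      · exact ⟨0, 0, fun x hx => by rw [hJe] at hx; exact absurd hx (Set.notMem_empty x),
          fun x _ _ => Or.inl (by simpa using (Real.exp_pos (lam * x)).le)⟩
      · set a := sInf J with ha
        set b := sSup J with hb
        have hab : a ≤ b := csInf_le_csSup hJne hJbb hJb
        rcases eq_or_lt_of_le hab with he | hab'
        · -- J = {a} : use tangent line at a
          refine ⟨Real.exp (lam * a) - lam * Real.exp (lam * a) * a,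
            lam * Real.exp (lam * a), fun x hx => ?_, fun x _ _ => Or.inl ?_⟩
          · have hxa : x = a := le_antisymm (he ▸ le_csSup hJb hx) (csInf_le hJbb hx)
            subst hxa
            ring_nf
            exact le_rfl
          · have key : 1 + lam * (x - a) ≤ Real.exp (lam * (x - a)) := by
              have := Real.add_one_le_exp (lam * (x - a))
              linarith
            have hpos := Real.exp_pos (lam * a)
            have h2 : Real.exp (lam * a) * (1 + lam * (x - a)) ≤
                Real.exp (lam * a) * Real.exp (lam * (x - a)) :=
              mul_le_mul_of_nonneg_left key hpos.le
            rw [← Real.exp_add] at h2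
            rw [show lam * a + lam * (x - a) = lam * x by ring] at h2
            calc Real.exp (lam * a) - lam * Real.exp (lam * a) * a + lam * Real.exp (lam * a) * x
                = Real.exp (lam * a) * (1 + lam * (x - a)) := by ring
              _ ≤ Real.exp (lam * x) := h2
        · -- chord
          set φ : ℝ → ℝ := fun x => Real.exp (lam * x) with hφ
          set β := (φ b - φ a) / (b - a) with hβ
          refine ⟨φ a - β * a, β, fun x hx => ?_, fun x hx0 hxJ => ?_⟩
          · have h2 := chord_above (convexOn_exp_mul lam) hab' (csInf_le hJbb hx)
              (le_csSup hJb hx)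
            calc Real.exp (lam * x) ≤ φ a + (φ b - φ a) / (b - a) * (x - a) := h2
              _ = φ a - β * a + β * x := by rw [hβ]; ring
          · by_cases hxa : x = a
            · exact Or.inr (Or.inl hxa)
            by_cases hxb : x = b
            · exact Or.inr (Or.inr hxb)
            rcases lt_trichotomy x a with h | h | h
            · refine Or.inl ?_
              have h2 := chord_below (convexOn_exp_mul lam) hab' (Or.inl h.le)
              calc φ a - β * a + β * x = φ a + (φ b - φ a) / (b - a) * (x - a) := by
                    rw [hβ]; ring
                _ ≤ Real.exp (lam * x) := h2
            · exact absurd h hxa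
            · rcases lt_trichotomy x b with h2 | h2 | h2
              · -- a < x < b : x ∈ J, contradiction
                exfalso
                obtain ⟨j, hjJ, hj⟩ := exists_lt_of_csInf_lt hJne h
                obtain ⟨k, hkJ, hk⟩ := exists_lt_of_lt_csSup hJne h2
                exact hxJ (hJord.out hjJ hkJ ⟨hj.le, hk.le⟩)
              · exact absurd h2 hxb
              · refine Or.inl ?_
                have h3 := chord_below (convexOn_exp_mul lam) hab' (Or.inr h2.le)
                calc φ a - β * a + β * x = φ a + (φ b - φ a) / (b - a) * (x - a) := by
                      rw [hβ]; ring
                  _ ≤ Real.exp (lam * x) := h3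
    -- a.e. key inequality
    have hkey : ∀ᵐ x : ℝ, (Real.exp (lam * x) - (α + β * x)) * (f x - g x) ≤ 0 := by
      filter_upwards [hneg, ae_ne_point (sInf J), ae_ne_point (sSup J)] with x hx1 hx2 hx3
      rcases lt_or_ge x 0 with h | h
      · rw [hx1 h, hg, gE_of_neg h]
        simp
      · by_cases hxJ : x ∈ J
        · exact mul_nonpos_iff.mpr (Or.inr ⟨by linarith [hin x hxJ], by linarith [hxJ.2]⟩)
        · have hfg : f x < g x := lt_of_not_ge fun hgf => hxJ ⟨h, hgf⟩
          rcases hout x h hxJ with h2 | h2 | h2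
          · exact mul_nonpos_iff.mpr (Or.inl ⟨by linarith, by linarith⟩)
          · exact absurd h2 hx2
          · exact absurd h2 hx3
    -- integrability
    have habs : Integrable (fun x => |x| * f x) := by
      refine hxint.congr ?_
      filter_upwards [hneg] with x hx
      rcases lt_or_ge x 0 with h | h
      · rw [hx h, mul_zero, mul_zero]
      · rw [abs_of_nonneg h]
    have hB : Integrable (fun x =>
        |α| * f x + |β| * (|x| * f x) + Real.exp (lam * x) * g x) :=
      ((hfint.const_mul _).add (habs.const_mul _)).add hgeint
    have hmexp : AEStronglyMeasurable (fun x => Real.exp (lam * x) * f x) volume :=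
      ((measurable_const.mul measurable_id').exp.mul hmf).aestronglyMeasurable
    have hint : Integrable (fun x => Real.exp (lam * x) * f x) := by
      refine hB.mono' hmexp ?_
      filter_upwards [hneg] with x hx
      have hfx := hf0 x
      have hgx := hgnn x
      have hex := (Real.exp_pos (lam * x)).le
      rw [Real.norm_of_nonneg (by positivity)]
      rcases lt_or_ge x 0 with h | h
      · rw [hx h, mul_zero]
        positivity
      · by_cases hxJ : x ∈ J
        · have h2 : Real.exp (lam * x) * f x ≤ (α + β * x) * f x :=
            mul_le_mul_of_nonneg_right (hin x hxJ) hfx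
          have h3 : (α + β * x) * f x ≤ (|α| + |β| * |x|) * f x := by
            refine mul_le_mul_of_nonneg_right ?_ hfx
            calc α + β * x ≤ |α + β * x| := le_abs_self _
              _ ≤ |α| + |β * x| := abs_add_le _ _
              _ = |α| + |β| * |x| := by rw [abs_mul]
          nlinarith [mul_nonneg hex hgx]
        · have hfg : f x ≤ g x := (lt_of_not_ge fun hgf => hxJ ⟨h, hgf⟩).le
          have h2 : Real.exp (lam * x) * f x ≤ Real.exp (lam * x) * g x :=
            mul_le_mul_of_nonneg_left hfg hex
          have h4 : 0 ≤ |β| * (|x| * f x) := by positivity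
          have h5 : 0 ≤ |α| * f x := by positivity
          linarith
    refine ⟨hint, ?_⟩
    -- value computation
    have hi1 : Integrable (fun x => Real.exp (lam * x) * f x - Real.exp (lam * x) * g x) :=
      hint.sub hgeint
    have hi2 : Integrable (fun x => α * f x - α * g x) :=
      (hfint.const_mul _).sub (hgint.const_mul _)
    have hi3 : Integrable (fun x => β * (x * f x) - β * (x * g x)) :=
      (hxint.const_mul _).sub (hgxint.const_mul _)
    have hrw : (fun x => (Real.exp (lam * x) - (α + β * x)) * (f x - g x)) =
        fun x => (Real.exp (lam * x) * f x - Real.exp (lam * x) * g x)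
          - (α * f x - α * g x) - (β * (x * f x) - β * (x * g x)) := by
      funext x; ring
    have hle : ∫ x, (Real.exp (lam * x) - (α + β * x)) * (f x - g x) ≤ 0 :=
      integral_nonpos_of_ae hkey
    have hi12 : Integrable (fun x => (Real.exp (lam * x) * f x - Real.exp (lam * x) * g x)
        - (α * f x - α * g x)) volume := hi1.sub hi2
    rw [hrw] at hle
    rw [integral_sub hi12 hi3, integral_sub hi1 hi2,
      integral_sub hint hgeint, integral_sub (hfint.const_mul _) (hgint.const_mul _),
      integral_sub (hxint.const_mul _) (hgxint.const_mul _)] at hle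
    simp only [integral_const_mul] at hle
    rw [h1, hgval, hxf, hgxval] at hle
    linarith [hgeval]
  · -- unbounded case : f = g a.e.
    have hJne : J.Nonempty := by
      obtain ⟨y, hy, _⟩ := not_bddAbove_iff.mp hJb 0
      exact ⟨y, hy⟩
    set a := sInf J with ha
    have hnn : ∀ᵐ x : ℝ, 0 ≤ (x - a) * (f x - g x) := by
      filter_upwards [hneg] with x hx
      rcases lt_trichotomy x a with h | h | h
      · have hxJ : x ∉ J := fun hxJ => absurd (csInf_le hJbb hxJ) (not_le.mpr h)
        rcases lt_or_ge x 0 with h0 | h0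
        · rw [hx h0, hg, gE_of_neg h0]
          simp
        · have hfg : f x < g x := lt_of_not_ge fun hgf => hxJ ⟨h0, hgf⟩
          exact mul_nonneg_iff.mpr (Or.inr ⟨by linarith, by linarith⟩)
      · rw [h]; simp
      · have hxJ : x ∈ J := by
          obtain ⟨j, hjJ, hj⟩ := exists_lt_of_csInf_lt hJne h
          obtain ⟨k, hkJ, hk⟩ := not_bddAbove_iff.mp hJb x
          exact hJord.out hjJ hkJ ⟨hj.le, hk.le⟩
        exact mul_nonneg (by linarith) (by linarith [hxJ.2])
    have hprodint : Integrable (fun x => (x - a) * (f x - g x)) := by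
      have : (fun x => (x - a) * (f x - g x)) =
          fun x => (x * f x - x * g x) - (a * f x - a * g x) := by
        funext x; ring
      rw [this]
      exact (hxint.sub hgxint).sub ((hfint.const_mul _).sub (hgint.const_mul _))
    have hzero : ∫ x, (x - a) * (f x - g x) = 0 := by
      have : (fun x => (x - a) * (f x - g x)) =
          fun x => (x * f x - x * g x) - (a * f x - a * g x) := by
        funext x; ring
      have hj1 : Integrable (fun x => x * f x - x * g x) volume := hxint.sub hgxint
      have hj2 : Integrable (fun x => a * f x - a * g x) volume :=
        (hfint.const_mul _).sub (hgint.const_mul _)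
      rw [this, integral_sub hj1 hj2,
        integral_sub hxint hgxint, integral_sub (hfint.const_mul _) (hgint.const_mul _)]
      simp only [integral_const_mul]
      rw [hxf, hgxval, h1, hgval]
      ring
    have hz : (fun x => (x - a) * (f x - g x)) =ᵐ[volume] 0 :=
      (integral_eq_zero_iff_of_nonneg_ae hnn hprodint).mp hzero
    have hfg : (fun x => Real.exp (lam * x) * f x) =ᵐ[volume]
        fun x => Real.exp (lam * x) * g x := by
      filter_upwards [hz, ae_ne_point a] with x h1x h2x
      have hxa : x - a ≠ 0 := sub_ne_zero.mpr h2x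
      have : f x - g x = 0 := by
        rcases mul_eq_zero.mp h1x with h | h
        · exact absurd h hxa
        · exact h
      have : f x = g x := by linarith
      rw [this]
    refine ⟨hgeint.congr hfg.symm, ?_⟩
    rw [integral_congr_ae hfg, hgeval]

lemma single_var {Ω : Type*} [MeasurableSpace Ω] (P : Measure Ω) [IsProbabilityMeasure P]
    (X : Ω → ℝ) (hX : Measurable X) (hpos : ∀ᵐ ω ∂P, 0 ≤ X ω)
    (f : ℝ → ℝ) (hf : ∀ t, 0 ≤ f t) (hlc : LogConcaveFn f)
    (hdens : P.map X = volume.withDensity (fun t => ENNReal.ofReal (f t)))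
    {μ : ℝ} (hμ : 0 < μ) (hmean : ∫ ω, X ω ∂P = μ)
    {lam : ℝ} (hl0 : 0 < lam) (hl1 : lam * μ < 1) :
    Integrable (fun ω => Real.exp (lam * X ω)) P ∧
      mgf X P lam ≤ (1 - lam * μ)⁻¹ := by
  have hmf : Measurable f := measurable_of_logconcave hf hlc
  have hmf' : Measurable fun t => (f t).toNNReal := hmf.real_toNNReal
  have hofReal : (fun t => ENNReal.ofReal (f t)) = fun t => ((f t).toNNReal : ℝ≥0∞) := rfl
  -- X is integrable
  have hXint : Integrable X P := by
    by_contra hcon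
    rw [integral_undef hcon] at hmean
    exact hμ.ne' hmean.symm
  -- work with the map measure
  have hmap_int : Integrable (fun x : ℝ => x) (P.map X) := by
    rw [integrable_map_measure measurable_id'.aestronglyMeasurable hX.aemeasurable]
    exact hXint
  have hmap_val : ∫ x, x ∂(P.map X) = μ := by
    rw [integral_map hX.aemeasurable measurable_id'.aestronglyMeasurable]
    exact hmean
  -- density relations
  have hwd : Integrable (fun x : ℝ => x) (volume.withDensity fun t => ((f t).toNNReal : ℝ≥0∞)) ∧
      ∫ x, x ∂(volume.withDensity fun t => ((f t).toNNReal : ℝ≥0∞)) = μ := by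
    rw [← hofReal, ← hdens]
    exact ⟨hmap_int, hmap_val⟩
  have hsmul : ∀ x : ℝ, (f x).toNNReal • x = x * f x := by
    intro x
    rw [NNReal.smul_def, smul_eq_mul, Real.coe_toNNReal _ (hf x), mul_comm]
  have hxint : Integrable (fun x => x * f x) volume := by
    have := (integrable_withDensity_iff_integrable_smul hmf').mp hwd.1
    refine this.congr (Filter.Eventually.of_forall fun x => hsmul x)
  have hxf : ∫ x, x * f x = μ := by
    have h6 := integral_withDensity_eq_integral_smul (μ := volume) hmf' (fun x : ℝ => x)
    rw [hwd.2] at h6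
    have h8 : ∫ x, x * f x = ∫ x, (f x).toNNReal • x :=
      integral_congr_ae (Filter.Eventually.of_forall fun x => (hsmul x).symm)
    rw [h8, ← h6]
  -- total mass
  have hprob : IsProbabilityMeasure (P.map X) := Measure.isProbabilityMeasure_map hX.aemeasurable
  have hfint : Integrable f volume := by
    have h2 : Integrable (fun _ : ℝ => (1:ℝ))
        (volume.withDensity fun t => ((f t).toNNReal : ℝ≥0∞)) := by
      rw [← hofReal, ← hdens]
      exact integrable_const 1
    have := (integrable_withDensity_iff_integrable_smul hmf').mp h2
    refine this.congr (Filter.Eventually.of_forall fun x => ?_)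
    simp only [NNReal.smul_def, smul_eq_mul, mul_one]
    exact Real.coe_toNNReal _ (hf x)
  have h1 : ∫ x, f x = 1 := by
    have h6 := integral_withDensity_eq_integral_smul (μ := volume) hmf' (fun _ : ℝ => (1:ℝ))
    rw [← hofReal, ← hdens] at h6
    have h7 : ∫ (_ : ℝ), (1:ℝ) ∂(P.map X) = 1 := by simp
    have h8 : ∫ x, f x = ∫ x, (f x).toNNReal • (1:ℝ) := by
      refine integral_congr_ae (Filter.Eventually.of_forall fun x => ?_)
      simp [NNReal.smul_def, Real.coe_toNNReal _ (hf x)]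
    rw [h8, ← h6, h7]
  -- zero on negatives a.e.
  have hneg : ∀ᵐ x : ℝ, x < 0 → f x = 0 := by
    have h0 : (P.map X) (Set.Iio 0) = 0 := by
      rw [Measure.map_apply hX measurableSet_Iio]
      have h2 := ae_iff.mp hpos
      have h3 : X ⁻¹' Set.Iio 0 = {a | ¬ 0 ≤ X a} := by
        ext a; simp [not_le]
      rw [h3]
      exact h2
    rw [hdens, withDensity_apply _ measurableSet_Iio] at h0
    have h4 := (setLIntegral_eq_zero_iff measurableSet_Iio hmf.ennreal_ofReal).mp h0
    filter_upwards [h4] with x hx hx0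
    have h5 := hx hx0
    simp only [ENNReal.ofReal_eq_zero] at h5
    exact le_antisymm h5 (hf x)
  obtain ⟨hcint, hcval⟩ := core hf hlc hmf hneg hfint h1 hxint hxf hμ hl0 hl1
  have hg : AEStronglyMeasurable (fun x : ℝ => Real.exp (lam * x)) (P.map X) :=
    ((measurable_const.mul measurable_id').exp).aestronglyMeasurable
  have hsmul2 : (fun x => (f x).toNNReal • Real.exp (lam * x)) =
      fun x => Real.exp (lam * x) * f x := by
    funext x
    simp only [NNReal.smul_def, smul_eq_mul]
    rw [Real.coe_toNNReal _ (hf x)]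
    ring
  constructor
  · have h9 : Integrable (fun x : ℝ => Real.exp (lam * x)) (P.map X) := by
      rw [hdens, hofReal, integrable_withDensity_iff_integrable_smul hmf']
      rw [hsmul2]
      exact hcint
    exact (integrable_map_measure hg hX.aemeasurable).mp h9
  · have e1 : mgf X P lam = ∫ x, Real.exp (lam * x) ∂(P.map X) :=
      (integral_map hX.aemeasurable hg).symm
    rw [e1, hdens, hofReal, integral_withDensity_eq_integral_smul hmf', hsmul2]
    exact hcval

end SumLC

/-- Upper tail bound for a sum of `n` independent nonnegative logconcave random variables
with common mean `μ`: `Pr[∑ Xᵢ ≥ (1+ε) μ n] ≤ exp (−n (ε − ln (1+ε)))`. -/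
theorem sum_nonneg_logconcave_upper_tail {Ω : Type*} [MeasurableSpace Ω] (P : Measure Ω)
    [IsProbabilityMeasure P] {n : ℕ} (X : Fin n → Ω → ℝ)
    (hX : ∀ i, Measurable (X i))
    (hindep : iIndepFun X P)
    (hpos : ∀ i, ∀ᵐ ω ∂P, 0 ≤ X i ω)
    (f : Fin n → ℝ → ℝ) (hf : ∀ i t, 0 ≤ f i t) (hlc : ∀ i, LogConcaveFn (f i))
    (hdens : ∀ i, P.map (X i) = volume.withDensity (fun t => ENNReal.ofReal (f i t)))
    (μ : ℝ) (hμ : 0 < μ) (hmean : ∀ i, ∫ ω, X i ω ∂P = μ)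
    (ε : ℝ) (hε : 0 < ε) :
    P {ω | (1 + ε) * μ * n ≤ ∑ i, X i ω} ≤
      ENNReal.ofReal (Real.exp (-(n * (ε - Real.log (1 + ε))))) := by
  have h1ε : (0:ℝ) < 1 + ε := by linarith
  set lam := ε / ((1 + ε) * μ) with hlam
  have hl0 : 0 < lam := by
    rw [hlam]; positivity
  have hlamμ : lam * μ = ε / (1 + ε) := by
    rw [hlam]; field_simp
  have hl1 : lam * μ < 1 := by
    rw [hlamμ, div_lt_one h1ε]; linarith
  have hinv : (1 - lam * μ)⁻¹ = 1 + ε := by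
    rw [hlamμ, show 1 - ε / (1 + ε) = 1 / (1 + ε) by field_simp; ring]
    simp
  have hsv := fun i => SumLC.single_var P (X i) (hX i) (hpos i) (f i) (hf i) (hlc i)
    (hdens i) hμ (hmean i) hl0 hl1
  have hSint : Integrable (fun ω => Real.exp (lam * (∑ i, X i) ω)) P :=
    hindep.integrable_exp_mul_sum hX (fun i _ => (hsv i).1)
  have hset : {ω | (1 + ε) * μ * n ≤ ∑ i, X i ω} =
      {ω | (1 + ε) * μ * n ≤ (∑ i, X i) ω} := by
    ext ω; simp [Finset.sum_apply]
  have hcher := measure_ge_le_exp_mul_mgf (X := ∑ i, X i) (μ := P)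
    ((1 + ε) * μ * n) hl0.le hSint
  have hmgfS : mgf (∑ i, X i) P lam = ∏ i, mgf (X i) P lam :=
    hindep.mgf_sum hX Finset.univ
  have hprod : ∏ i, mgf (X i) P lam ≤ (1 + ε) ^ n := by
    calc ∏ i, mgf (X i) P lam ≤ ∏ _i : Fin n, (1 + ε) := by
          refine Finset.prod_le_prod (fun i _ => mgf_nonneg) (fun i _ => ?_)
          rw [← hinv]
          exact (hsv i).2
      _ = (1 + ε) ^ n := by
          rw [Finset.prod_const, Finset.card_univ, Fintype.card_fin]
  have hexp : Real.exp (-lam * ((1 + ε) * μ * n)) * (1 + ε) ^ n =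
      Real.exp (-(n * (ε - Real.log (1 + ε)))) := by
    have h2 : -lam * ((1 + ε) * μ * n) = -(ε * n) := by
      rw [hlam]; field_simp
    have h3 : ((1 + ε) : ℝ) ^ n = Real.exp (n * Real.log (1 + ε)) := by
      rw [← Real.exp_log h1ε, ← Real.exp_nat_mul, Real.exp_log h1ε]
    rw [h2, h3, ← Real.exp_add]
    congr 1
    ring
  have hrhs : (P {ω | (1 + ε) * μ * n ≤ (∑ i, X i) ω}).toReal ≤
      Real.exp (-(n * (ε - Real.log (1 + ε)))) := by
    calc (P {ω | (1 + ε) * μ * n ≤ (∑ i, X i) ω}).toReal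
        ≤ Real.exp (-lam * ((1 + ε) * μ * n)) * mgf (∑ i, X i) P lam := hcher
      _ ≤ Real.exp (-lam * ((1 + ε) * μ * n)) * (1 + ε) ^ n := by
          refine mul_le_mul_of_nonneg_left ?_ (Real.exp_pos _).le
          rw [hmgfS]; exact hprod
      _ = Real.exp (-(n * (ε - Real.log (1 + ε)))) := hexp
  rw [hset]
  have hne : P {ω | (1 + ε) * μ * n ≤ (∑ i, X i) ω} ≠ ⊤ := measure_ne_top _ _
  rw [← ENNReal.ofReal_toReal hne]
  exact ENNReal.ofReal_le_ofReal hrhs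
end

section
/- Let X_1,...,X_n be independent mean-zero real random variables satisfying E[X_i⁴] ≤ 3·E[X_i²]² < ∞ for all i. Then for any scalars a_1,...,a_n, letting Z = |∑ a_i X_i|, one has E[Z⁴] ≤ 3·E[Z²]² and E[Z²] ≤ 3·E[Z]². -/
open MeasureTheory ProbabilityTheory

set_option linter.unusedSectionVars false

section Aux
variable {Ω : Type*} [MeasurableSpace Ω] {P : Measure Ω} [IsProbabilityMeasure P]

lemma integrable_pow_of_memL4 {f : Ω → ℝ} (hm : Measurable f)
    (h4 : MemLp f 4 P) {k : ℕ} (hk : k ≤ 4) :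
    Integrable (fun ω => f ω ^ k) P := by
  have h4' : Integrable (fun ω => ‖f ω‖ ^ (4 : ℝ)) P :=
    h4.integrable_norm_rpow (by norm_num) (by norm_num)
  have h4'' : Integrable (fun ω => f ω ^ 4) P := by
    refine h4'.congr (Filter.Eventually.of_forall fun ω => ?_)
    simp only []
    rw [Real.norm_eq_abs, show ((4:ℝ)) = ((4:ℕ):ℝ) by norm_num, Real.rpow_natCast, ← abs_pow,
      abs_of_nonneg (by positivity)]
  refine Integrable.mono' (h4''.add (integrable_const 1))
    ((hm.pow_const k).aestronglyMeasurable)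
    (Filter.Eventually.of_forall fun ω => ?_)
  rw [Real.norm_eq_abs, abs_pow]
  rcases le_total |f ω| 1 with h | h
  · have : |f ω| ^ k ≤ 1 := pow_le_one₀ (abs_nonneg _) h
    have h2 : 0 ≤ f ω ^ 4 := by positivity
    simp only [Pi.add_apply]
    linarith
  · have h1 : |f ω| ^ k ≤ |f ω| ^ 4 := pow_le_pow_right₀ h hk
    have h2 : |f ω| ^ 4 = f ω ^ 4 := by rw [← abs_pow, abs_of_nonneg (by positivity)]
    simp only [Pi.add_apply]
    linarith [h1, h2]

lemma khinchine_key {n : ℕ} {P : Measure Ω} [IsProbabilityMeasure P]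
    (Y : Fin n → Ω → ℝ) (hmeas : ∀ i, Measurable (Y i))
    (hindep : iIndepFun Y P)
    (hL4 : ∀ i, MemLp (Y i) 4 P)
    (hmean : ∀ i, ∫ ω, Y i ω ∂P = 0)
    (hkurt : ∀ i, ∫ ω, (Y i ω) ^ 4 ∂P ≤ 3 * (∫ ω, (Y i ω) ^ 2 ∂P) ^ 2)
    (s : Finset (Fin n)) :
    (∫ ω, (∑ i ∈ s, Y i ω) ^ 2 ∂P = ∑ i ∈ s, ∫ ω, (Y i ω) ^ 2 ∂P) ∧
      ∫ ω, (∑ i ∈ s, Y i ω) ^ 4 ∂P ≤ 3 * (∑ i ∈ s, ∫ ω, (Y i ω) ^ 2 ∂P) ^ 2 := by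
  induction s using Finset.induction_on with
  | empty => simp
  | @insert j s hj ih =>
    simp_rw [Finset.sum_insert hj]
    set W : Ω → ℝ := Y j with hW
    set T : Ω → ℝ := fun ω => ∑ i ∈ s, Y i ω with hT
    have hT_meas : Measurable T := Finset.measurable_sum s fun i _ => hmeas i
    have hT4 : MemLp T 4 P := memLp_finset_sum s fun i _ => hL4 i
    have hTmean : ∫ ω, T ω ∂P = 0 := by
      rw [hT, integral_finset_sum s fun i _ => (hL4 i).integrable (by norm_num)]
      simp [hmean]
    have hiT : ∀ k : ℕ, k ≤ 4 → Integrable (fun ω => T ω ^ k) P :=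
      fun k hk => integrable_pow_of_memL4 hT_meas hT4 hk
    have hiW : ∀ k : ℕ, k ≤ 4 → Integrable (fun ω => W ω ^ k) P :=
      fun k hk => integrable_pow_of_memL4 (hmeas j) (hL4 j) hk
    have hWT : IndepFun T W P := by
      have h := hindep.indepFun_finsetSum_of_notMem hmeas hj
      have he : (∑ i ∈ s, Y i) = T := by
        funext ω; simp [hT, Finset.sum_apply]
      rwa [he] at h
    have hmul : ∀ k m : ℕ, k ≤ 4 → m ≤ 4 →
        (∫ ω, T ω ^ k * W ω ^ m ∂P
            = (∫ ω, T ω ^ k ∂P) * ∫ ω, W ω ^ m ∂P) ∧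
          Integrable (fun ω => T ω ^ k * W ω ^ m) P := by
      intro k m hk hm
      have hI : IndepFun (fun ω => T ω ^ k) (fun ω => W ω ^ m) P :=
        hWT.comp (measurable_id.pow_const k) (measurable_id.pow_const m)
      exact ⟨hI.integral_fun_mul_eq_mul_integral ((hT_meas.pow_const k).aestronglyMeasurable)
          (((hmeas j).pow_const m).aestronglyMeasurable),
        hI.integrable_mul (hiT k hk) (hiW m hm)⟩
    have hT1 : ∫ ω, T ω ^ 1 ∂P = 0 := by simpa using hTmean
    have hW1 : ∫ ω, W ω ^ 1 ∂P = 0 := by simpa using hmean j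
    -- second moment
    have e2 : ∫ ω, (W ω + T ω) ^ 2 ∂P
        = (∫ ω, T ω ^ 2 ∂P) + ∫ ω, W ω ^ 2 ∂P := by
      have hexp : ∀ ω, (W ω + T ω) ^ 2
          = T ω ^ 2 + (2 * (T ω ^ 1 * W ω ^ 1) + W ω ^ 2) := fun ω => by ring
      simp_rw [hexp]
      have i11 := hmul 1 1 (by norm_num) (by norm_num)
      have ha1 : Integrable (fun ω => 2 * (T ω ^ 1 * W ω ^ 1)) P := i11.2.const_mul 2
      have ha2 : Integrable (fun ω => 2 * (T ω ^ 1 * W ω ^ 1) + W ω ^ 2) P :=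
        ha1.add (hiW 2 (by norm_num))
      rw [integral_add (hiT 2 (by norm_num)) ha2, integral_add ha1 (hiW 2 (by norm_num)),
        integral_const_mul, i11.1, hT1]
      ring
    -- fourth moment
    have e4 : ∫ ω, (W ω + T ω) ^ 4 ∂P
        = (∫ ω, T ω ^ 4 ∂P) + 6 * ((∫ ω, T ω ^ 2 ∂P) * ∫ ω, W ω ^ 2 ∂P)
          + ∫ ω, W ω ^ 4 ∂P := by
      have hexp : ∀ ω, (W ω + T ω) ^ 4
          = T ω ^ 4 + (4 * (T ω ^ 3 * W ω ^ 1) + (6 * (T ω ^ 2 * W ω ^ 2)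
            + (4 * (T ω ^ 1 * W ω ^ 3) + W ω ^ 4))) := fun ω => by ring
      simp_rw [hexp]
      have i31 := hmul 3 1 (by norm_num) (by norm_num)
      have i22 := hmul 2 2 (by norm_num) (by norm_num)
      have i13 := hmul 1 3 (by norm_num) (by norm_num)
      have b31 : Integrable (fun ω => 4 * (T ω ^ 3 * W ω ^ 1)) P := i31.2.const_mul 4
      have b22 : Integrable (fun ω => 6 * (T ω ^ 2 * W ω ^ 2)) P := i22.2.const_mul 6
      have b13 : Integrable (fun ω => 4 * (T ω ^ 1 * W ω ^ 3)) P := i13.2.const_mul 4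
      have c1 : Integrable (fun ω => 4 * (T ω ^ 1 * W ω ^ 3) + W ω ^ 4) P :=
        b13.add (hiW 4 (by norm_num))
      have c2 : Integrable (fun ω => 6 * (T ω ^ 2 * W ω ^ 2)
          + (4 * (T ω ^ 1 * W ω ^ 3) + W ω ^ 4)) P := b22.add c1
      have c3 : Integrable (fun ω => 4 * (T ω ^ 3 * W ω ^ 1)
          + (6 * (T ω ^ 2 * W ω ^ 2) + (4 * (T ω ^ 1 * W ω ^ 3) + W ω ^ 4))) P := b31.add c2
      rw [integral_add (hiT 4 (by norm_num)) c3, integral_add b31 c2, integral_add b22 c1,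
        integral_add b13 (hiW 4 (by norm_num)), integral_const_mul, integral_const_mul,
        integral_const_mul, i31.1, i22.1, i13.1, hT1, hW1]
      ring
    have hσ : ∀ i, (0:ℝ) ≤ ∫ ω, (Y i ω) ^ 2 ∂P := fun i =>
      integral_nonneg fun ω => sq_nonneg _
    have hA : (0:ℝ) ≤ ∑ i ∈ s, ∫ ω, (Y i ω) ^ 2 ∂P := Finset.sum_nonneg fun i _ => hσ i
    have hb : (0:ℝ) ≤ ∫ ω, W ω ^ 2 ∂P := integral_nonneg fun ω => sq_nonneg _
    have ih1 : ∫ ω, T ω ^ 2 ∂P = ∑ i ∈ s, ∫ ω, (Y i ω) ^ 2 ∂P := ih.1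
    have ih2 : ∫ ω, T ω ^ 4 ∂P ≤ 3 * (∑ i ∈ s, ∫ ω, (Y i ω) ^ 2 ∂P) ^ 2 := ih.2
    have hk4 : ∫ ω, W ω ^ 4 ∂P ≤ 3 * (∫ ω, W ω ^ 2 ∂P) ^ 2 := hkurt j
    constructor
    · rw [e2, ih1]; ring
    · rw [e4, ih1]
      nlinarith [ih2, hk4, hA, hb]



lemma sq_integral_mul_le {f g : Ω → ℝ} (hf0 : ∀ ω, 0 ≤ f ω) (hg0 : ∀ ω, 0 ≤ g ω)
    (hf : MemLp f 2 P) (hg : MemLp g 2 P) :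
    (∫ ω, f ω * g ω ∂P) ^ 2 ≤ (∫ ω, f ω ^ 2 ∂P) * (∫ ω, g ω ^ 2 ∂P) := by
  have hpq : Real.HolderConjugate 2 2 := Real.HolderConjugate.two_two
  have hf' : MemLp f (ENNReal.ofReal 2) P := by
    rwa [show ENNReal.ofReal 2 = 2 by norm_num]
  have hg' : MemLp g (ENNReal.ofReal 2) P := by
    rwa [show ENNReal.ofReal 2 = 2 by norm_num]
  have h := integral_mul_le_Lp_mul_Lq_of_nonneg hpq
    (Filter.Eventually.of_forall hf0) (Filter.Eventually.of_forall hg0) hf' hg'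
  have hrw : ∀ h : Ω → ℝ, ∫ ω, h ω ^ (2:ℝ) ∂P = ∫ ω, h ω ^ 2 ∂P := by
    intro h
    simp_rw [show ∀ x : ℝ, x ^ (2:ℝ) = x ^ 2 from fun x => by
      rw [show ((2:ℝ)) = ((2:ℕ):ℝ) by norm_num, Real.rpow_natCast]]
  rw [hrw f, hrw g, ← Real.sqrt_eq_rpow, ← Real.sqrt_eq_rpow] at h
  have hu : (0:ℝ) ≤ ∫ ω, f ω ^ 2 ∂P := integral_nonneg fun ω => sq_nonneg _
  have hv : (0:ℝ) ≤ ∫ ω, g ω ^ 2 ∂P := integral_nonneg fun ω => sq_nonneg _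
  have h0 : (0:ℝ) ≤ ∫ ω, f ω * g ω ∂P :=
    integral_nonneg fun ω => mul_nonneg (hf0 ω) (hg0 ω)
  nlinarith [Real.sq_sqrt hu, Real.sq_sqrt hv, Real.sqrt_nonneg (∫ ω, f ω ^ 2 ∂P),
    Real.sqrt_nonneg (∫ ω, g ω ^ 2 ∂P)]

end Aux

/-- Khinchine-type inequality: if `X₁, …, Xₙ` are independent mean-zero random variables with
`E[Xᵢ⁴] ≤ 3 E[Xᵢ²]²`, then for any scalars `aᵢ`, setting `Z = |∑ aᵢ Xᵢ|`, we have
`E[Z⁴] ≤ 3 E[Z²]²` and `E[Z²] ≤ 3 E[Z]²`. -/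
theorem khinchine_type_inequality {Ω : Type*} [MeasurableSpace Ω] (P : Measure Ω)
    [IsProbabilityMeasure P] {n : ℕ} (X : Fin n → Ω → ℝ)
    (hX : ∀ i, Measurable (X i))
    (hindep : iIndepFun X P)
    (hL4 : ∀ i, MemLp (X i) 4 P)
    (hmean : ∀ i, ∫ ω, X i ω ∂P = 0)
    (hkurt : ∀ i, ∫ ω, (X i ω) ^ 4 ∂P ≤ 3 * (∫ ω, (X i ω) ^ 2 ∂P) ^ 2)
    (a : Fin n → ℝ) :
    (∫ ω, |∑ i, a i * X i ω| ^ 4 ∂P ≤ 3 * (∫ ω, |∑ i, a i * X i ω| ^ 2 ∂P) ^ 2) ∧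
      ∫ ω, |∑ i, a i * X i ω| ^ 2 ∂P ≤ 3 * (∫ ω, |∑ i, a i * X i ω| ∂P) ^ 2 := by
  set Y : Fin n → Ω → ℝ := fun i ω => a i * X i ω with hYdef
  have hYmeas : ∀ i, Measurable (Y i) := fun i => (hX i).const_mul (a i)
  have hYindep : iIndepFun Y P :=
    hindep.comp (fun i x => a i * x) (fun i => measurable_const_mul (a i))
  have hYL4 : ∀ i, MemLp (Y i) 4 P := fun i => (hL4 i).const_mul (a i)
  have hYmean : ∀ i, ∫ ω, Y i ω ∂P = 0 := by
    intro i
    simp only [hYdef]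
    rw [integral_const_mul, hmean i, mul_zero]
  have hYkurt : ∀ i, ∫ ω, (Y i ω) ^ 4 ∂P ≤ 3 * (∫ ω, (Y i ω) ^ 2 ∂P) ^ 2 := by
    intro i
    simp only [hYdef, mul_pow]
    rw [integral_const_mul, integral_const_mul]
    have := hkurt i
    nlinarith [pow_nonneg (sq_nonneg (a i)) 2, sq_nonneg (a i), sq_nonneg (∫ ω, X i ω ^ 2 ∂P)]
  obtain ⟨hSvar, hS4le⟩ := khinchine_key Y hYmeas hYindep hYL4 hYmean hYkurt Finset.univ
  set S : Ω → ℝ := fun ω => ∑ i, Y i ω with hSdef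
  have habs4 : ∀ x : ℝ, |x| ^ 4 = x ^ 4 := fun x => by
    rw [← abs_pow, abs_of_nonneg (by positivity)]
  have part1 : ∫ ω, |∑ i, a i * X i ω| ^ 4 ∂P
      ≤ 3 * (∫ ω, |∑ i, a i * X i ω| ^ 2 ∂P) ^ 2 := by
    simp only [habs4, sq_abs]
    calc ∫ ω, (∑ i, a i * X i ω) ^ 4 ∂P
        ≤ 3 * (∑ i, ∫ ω, (Y i ω) ^ 2 ∂P) ^ 2 := hS4le
      _ = 3 * (∫ ω, (∑ i, a i * X i ω) ^ 2 ∂P) ^ 2 := by rw [← hSvar]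
  refine ⟨part1, ?_⟩
  -- second part
  have hSmeas : Measurable S := Finset.measurable_sum _ fun i _ => hYmeas i
  have hS4 : MemLp S 4 P := memLp_finset_sum Finset.univ fun i _ => hYL4 i
  have hiS : ∀ k : ℕ, k ≤ 4 → Integrable (fun ω => S ω ^ k) P :=
    fun k hk => integrable_pow_of_memL4 hSmeas hS4 hk
  set Z : Ω → ℝ := fun ω => |S ω| with hZdef
  have hZ0 : ∀ ω, 0 ≤ Z ω := fun ω => abs_nonneg _
  have hZmeas : Measurable Z := hSmeas.abs
  have hiZ : ∀ k : ℕ, k ≤ 4 → Integrable (fun ω => Z ω ^ k) P := by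
    intro k hk
    refine ((hiS k hk).abs).congr (Filter.Eventually.of_forall fun ω => ?_)
    simp [hZdef, abs_pow]
  -- L² memberships
  have hZL2 : MemLp Z 2 P := (hS4.mono_exponent (by norm_num)).abs
  have hsqZL2 : MemLp (fun ω => Real.sqrt (Z ω)) 2 P := by
    rw [memLp_two_iff_integrable_sq (hZmeas.sqrt.aestronglyMeasurable)]
    refine (hiZ 1 (by norm_num)).congr (Filter.Eventually.of_forall fun ω => ?_)
    simp [Real.sq_sqrt (hZ0 ω)]
  have hZsqZL2 : MemLp (fun ω => Z ω * Real.sqrt (Z ω)) 2 P := by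
    rw [memLp_two_iff_integrable_sq (show AEStronglyMeasurable (fun ω => Z ω * Real.sqrt (Z ω)) P from (hZmeas.mul hZmeas.sqrt).aestronglyMeasurable)]
    refine (hiZ 3 (by norm_num)).congr (Filter.Eventually.of_forall fun ω => ?_)
    have := Real.sq_sqrt (hZ0 ω)
    simp only []
    rw [eq_comm, mul_pow, this]
    ring
  have hZ2L2 : MemLp (fun ω => Z ω ^ 2) 2 P := by
    rw [memLp_two_iff_integrable_sq ((hZmeas.pow_const 2).aestronglyMeasurable)]
    refine (hiZ 4 (by norm_num)).congr (Filter.Eventually.of_forall fun ω => ?_)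
    ring_nf
  -- Cauchy–Schwarz applications
  have cs1 : (∫ ω, Z ω ^ 2 ∂P) ^ 2 ≤ (∫ ω, Z ω ∂P) * ∫ ω, Z ω ^ 3 ∂P := by
    have h := sq_integral_mul_le (P := P)
      (fun ω => Real.sqrt_nonneg (Z ω))
      (fun ω => mul_nonneg (hZ0 ω) (Real.sqrt_nonneg (Z ω))) hsqZL2 hZsqZL2
    have e1 : ∫ ω, Real.sqrt (Z ω) * (Z ω * Real.sqrt (Z ω)) ∂P = ∫ ω, Z ω ^ 2 ∂P := by
      refine integral_congr_ae (Filter.Eventually.of_forall fun ω => ?_)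
      have := Real.mul_self_sqrt (hZ0 ω)
      simp only []
      nlinarith [this]
    have e2 : ∫ ω, (Real.sqrt (Z ω)) ^ 2 ∂P = ∫ ω, Z ω ∂P := by
      refine integral_congr_ae (Filter.Eventually.of_forall fun ω => ?_)
      simp [Real.sq_sqrt (hZ0 ω)]
    have e3 : ∫ ω, (Z ω * Real.sqrt (Z ω)) ^ 2 ∂P = ∫ ω, Z ω ^ 3 ∂P := by
      refine integral_congr_ae (Filter.Eventually.of_forall fun ω => ?_)
      have := Real.sq_sqrt (hZ0 ω)
      simp only []
      rw [mul_pow, this]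
      ring
    rw [e1, e2, e3] at h
    exact h
  have cs2 : (∫ ω, Z ω ^ 3 ∂P) ^ 2 ≤ (∫ ω, Z ω ^ 2 ∂P) * ∫ ω, Z ω ^ 4 ∂P := by
    have h := sq_integral_mul_le (P := P) hZ0 (fun ω => sq_nonneg (Z ω)) hZL2 hZ2L2
    have e1 : ∫ ω, Z ω * Z ω ^ 2 ∂P = ∫ ω, Z ω ^ 3 ∂P := by
      refine integral_congr_ae (Filter.Eventually.of_forall fun ω => ?_)
      ring_nf
    have e3 : ∫ ω, (Z ω ^ 2) ^ 2 ∂P = ∫ ω, Z ω ^ 4 ∂P := by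
      refine integral_congr_ae (Filter.Eventually.of_forall fun ω => ?_)
      ring_nf
    rw [e1, e3] at h
    exact h
  -- notation
  set A := ∫ ω, Z ω ^ 2 ∂P with hAdef
  set B := ∫ ω, Z ω ∂P with hBdef
  set C := ∫ ω, Z ω ^ 3 ∂P with hCdef
  set D := ∫ ω, Z ω ^ 4 ∂P with hDdef
  have hAnn : 0 ≤ A := integral_nonneg fun ω => sq_nonneg _
  have hBnn : 0 ≤ B := integral_nonneg fun ω => hZ0 ω
  have hCnn : 0 ≤ C := integral_nonneg fun ω => pow_nonneg (hZ0 ω) 3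
  have hDA : D ≤ 3 * A ^ 2 := by
    have e4 : D = ∫ ω, |S ω| ^ 4 ∂P := rfl
    have eA : A = ∫ ω, |S ω| ^ 2 ∂P := rfl
    calc D = ∫ ω, |∑ i, a i * X i ω| ^ 4 ∂P := rfl
      _ ≤ 3 * (∫ ω, |∑ i, a i * X i ω| ^ 2 ∂P) ^ 2 := part1
      _ = 3 * A ^ 2 := rfl
  -- conclude: goal is A ≤ 3 * B ^ 2
  show A ≤ 3 * B ^ 2
  rcases eq_or_lt_of_le hAnn with hA0 | hApos
  · rw [← hA0]; positivity
  · have hC2 : C ^ 2 ≤ 3 * A ^ 3 := by nlinarith [cs2, hDA, hAnn]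
    have h4 : A ^ 4 ≤ 3 * B ^ 2 * A ^ 3 := by nlinarith [cs1, hC2, hAnn, hBnn, hCnn]
    have hA3 : 0 < A ^ 3 := pow_pos hApos 3
    have := le_of_mul_le_mul_right (by nlinarith [h4] : A * A ^ 3 ≤ (3 * B ^ 2) * A ^ 3) hA3
    exact this
end

section
/- Let c = (c_1,...,c_n) where the c_i are i.i.d. standard Gaussian. For every α ∈ [0, 2√(ln 2)] and β ∈ [1/2,1] with H(β) ≤ α²/4 (H being natural-log binary entropy), Pr[ max over x ∈ {0,1}^n with ‖x‖₁ ≥ βn of cᵀx ≥ αn ] ≤ exp(−α²n/4). -/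
open MeasureTheory ProbabilityTheory

open scoped ENNReal NNReal

section GaussAux
open Real
open scoped ENNReal NNReal

lemma gauss_eq : gaussianReal 0 1
    = MeasureTheory.volume.withDensity
      (fun x => ((gaussianPDFReal 0 1 x).toNNReal : ENNReal)) :=
  gaussianReal_of_var_ne_zero 0 one_ne_zero

lemma pdf_form (t x : ℝ) : gaussianPDFReal 0 1 x * Real.exp (t * x)
    = ((Real.sqrt (2 * π))⁻¹ * Real.exp (t ^ 2 / 2)) * Real.exp (-(1/2) * (x - t) ^ 2) := by
  simp only [gaussianPDFReal, NNReal.coe_one, mul_one, sub_zero]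
  rw [mul_assoc, mul_assoc, ← Real.exp_add, ← Real.exp_add]
  ring_nf

lemma integrable_shift_gauss (t : ℝ) :
    Integrable (fun x => Real.exp (-(1/2) * (x - t) ^ 2)) := by
  exact (integrable_exp_neg_mul_sq (by norm_num : (0:ℝ) < 1/2)).comp_sub_right t

lemma integral_shift_gauss (t : ℝ) :
    ∫ x, Real.exp (-(1/2) * (x - t) ^ 2) = Real.sqrt (2 * π) := by
  rw [integral_sub_right_eq_self (fun x => Real.exp (-(1/2) * x ^ 2)) t,
    integral_gaussian]
  rw [show π / (1/2) = 2 * π by ring]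

lemma integrable_exp_gauss (t : ℝ) :
    Integrable (fun x => Real.exp (t * x)) (gaussianReal 0 1) := by
  rw [gauss_eq, integrable_withDensity_iff_integrable_smul
    ((measurable_gaussianPDFReal 0 1).real_toNNReal)]
  have : (fun x => (gaussianPDFReal 0 1 x).toNNReal • Real.exp (t * x))
      = fun x => ((Real.sqrt (2 * π))⁻¹ * Real.exp (t ^ 2 / 2)) * Real.exp (-(1/2) * (x - t) ^ 2) := by
    ext x
    rw [NNReal.smul_def, smul_eq_mul, Real.coe_toNNReal _ (gaussianPDFReal_nonneg 0 1 x),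
      pdf_form]
  rw [this]
  exact (integrable_shift_gauss t).const_mul _

lemma integral_exp_gauss (t : ℝ) :
    ∫ x, Real.exp (t * x) ∂(gaussianReal 0 1) = Real.exp (t ^ 2 / 2) := by
  rw [gauss_eq, integral_withDensity_eq_integral_smul
    ((measurable_gaussianPDFReal 0 1).real_toNNReal)]
  have : (fun x => (gaussianPDFReal 0 1 x).toNNReal • Real.exp (t * x))
      = fun x => ((Real.sqrt (2 * π))⁻¹ * Real.exp (t ^ 2 / 2)) * Real.exp (-(1/2) * (x - t) ^ 2) := by
    ext x
    rw [NNReal.smul_def, smul_eq_mul, Real.coe_toNNReal _ (gaussianPDFReal_nonneg 0 1 x),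
      pdf_form]
  rw [this, MeasureTheory.integral_const_mul, integral_shift_gauss, mul_comm, ← mul_assoc,
    mul_inv_cancel₀ (by positivity : Real.sqrt (2 * π) ≠ 0), one_mul]

noncomputable def gaussMS : MeasureSpace ℝ := ⟨gaussianReal 0 1⟩

lemma pi_integral_prod {n : ℕ} (f : Fin n → ℝ → ℝ) :
    ∫ c : Fin n → ℝ, ∏ i, f i (c i) ∂(Measure.pi fun _ => gaussianReal 0 1)
      = ∏ i, ∫ x, f i x ∂(gaussianReal 0 1) :=
  MeasureTheory.integral_fintype_prod_eq_prod (𝕜 := ℝ) (E := fun _ => ℝ) f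
    (μ := fun _ => gaussianReal 0 1)

lemma pi_integrable_prod {n : ℕ} (f : Fin n → ℝ → ℝ)
    (hf : ∀ i, Integrable (f i) (gaussianReal 0 1)) :
    Integrable (fun c : Fin n → ℝ => ∏ i, f i (c i))
      (Measure.pi fun _ => gaussianReal 0 1) :=
  MeasureTheory.Integrable.fintype_prod (f := f) (μ := fun _ => gaussianReal 0 1) hf

lemma chernoff_S {n : ℕ} (S : Finset (Fin n)) (t ε : ℝ) (ht : 0 ≤ t) :
    (Measure.pi fun _ : Fin n => gaussianReal 0 1) {c | ε ≤ ∑ i ∈ S, c i}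
      ≤ ENNReal.ofReal (Real.exp (-t * ε) * Real.exp (S.card * (t ^ 2 / 2))) := by
  set P := Measure.pi fun _ : Fin n => gaussianReal 0 1 with hP
  set X : (Fin n → ℝ) → ℝ := fun c => ∑ i ∈ S, c i with hX
  set f : Fin n → ℝ → ℝ := fun i y => if i ∈ S then Real.exp (t * y) else 1 with hf
  have hprod : ∀ c : Fin n → ℝ, Real.exp (t * X c) = ∏ i, f i (c i) := by
    intro c
    rw [hX, Finset.mul_sum, Real.exp_sum]
    rw [show ∏ i : Fin n, f i (c i)
        = ∏ i ∈ Finset.univ ∩ S, Real.exp (t * c i) from Finset.prod_ite_mem _ _ _,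
      Finset.univ_inter]
  have hfint : ∀ i, Integrable (f i) (gaussianReal 0 1) := by
    intro i
    by_cases h : i ∈ S <;> simp [hf, h, integrable_exp_gauss t]
  have h_int : Integrable (fun c => Real.exp (t * X c)) P := by
    rw [funext hprod]
    exact pi_integrable_prod f hfint
  have hmgf : mgf X P t = Real.exp (S.card * (t ^ 2 / 2)) := by
    rw [mgf]
    calc ∫ c, Real.exp (t * X c) ∂P = ∫ c : Fin n → ℝ, ∏ i, f i (c i) ∂P := by
          simp_rw [hprod]
      _ = ∏ i, ∫ x, f i x ∂(gaussianReal 0 1) := pi_integral_prod f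
      _ = ∏ i : Fin n, (if i ∈ S then Real.exp (t ^ 2 / 2) else 1) := by
          refine Finset.prod_congr rfl fun i _ => ?_
          by_cases h : i ∈ S <;> simp [hf, h, integral_exp_gauss t]
      _ = Real.exp (t ^ 2 / 2) ^ S.card := by
          rw [Finset.prod_ite_mem, Finset.univ_inter, Finset.prod_const]
      _ = Real.exp (S.card * (t ^ 2 / 2)) := (Real.exp_nat_mul _ _).symm
  have hch := measure_ge_le_exp_mul_mgf (μ := P) (X := X) ε ht h_int
  rw [hmgf] at hch
  calc P {c | ε ≤ X c} = ENNReal.ofReal (P {c | ε ≤ X c}).toReal :=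
        (ENNReal.ofReal_toReal (measure_ne_top P _)).symm
    _ ≤ ENNReal.ofReal (Real.exp (-t * ε) * Real.exp (S.card * (t ^ 2 / 2))) :=
        ENNReal.ofReal_le_ofReal hch

lemma count_entropy {n : ℕ} {β : ℝ} (hβ0 : 1 / 2 ≤ β) (hβ1 : β ≤ 1) :
    (((Finset.univ.filter fun S : Finset (Fin n) => β * n ≤ (S.card : ℝ)).card : ℝ))
      ≤ Real.exp (n * Real.binEntropy β) := by
  classical
  set T := Finset.univ.filter fun S : Finset (Fin n) => β * n ≤ (S.card : ℝ) with hT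
  have hw_sum : ∑ S : Finset (Fin n), β ^ S.card * (1 - β) ^ (n - S.card) = 1 := by
    have h := Finset.prod_add (fun _ : Fin n => β) (fun _ : Fin n => 1 - β) Finset.univ
    simp only [add_sub_cancel, Finset.prod_const, Finset.card_univ, Fintype.card_fin,
      one_pow] at h
    rw [Finset.powerset_univ] at h
    refine Eq.trans ?_ h.symm
    refine Finset.sum_congr rfl fun S _ => ?_
    symm
    rw [Finset.card_sdiff_of_subset (Finset.subset_univ S), Finset.card_univ, Fintype.card_fin]
  have hterm : ∀ S ∈ T, Real.exp (-(n * Real.binEntropy β))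
      ≤ β ^ S.card * (1 - β) ^ (n - S.card) := by
    intro S hS
    have hk : β * n ≤ (S.card : ℝ) := (Finset.mem_filter.mp hS).2
    have hkn : S.card ≤ n := by
      simpa [Fintype.card_fin] using Finset.card_le_univ S
    by_cases hβ : β = 1
    · subst hβ
      have h1 : (n : ℝ) ≤ S.card := by simpa using hk
      have h2 : S.card = n := le_antisymm hkn (by exact_mod_cast h1)
      simp [h2]
    · have hb1 : β < 1 := lt_of_le_of_ne hβ1 hβ
      have hb0 : (0:ℝ) < β := by linarith
      have h1b : (0:ℝ) < 1 - β := by linarith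
      have e1 : β ^ S.card * (1 - β) ^ (n - S.card)
          = Real.exp ((S.card : ℝ) * Real.log β + ((n : ℝ) - S.card) * Real.log (1 - β)) := by
        have hcast : ((n : ℝ) - S.card) = ((n - S.card : ℕ) : ℝ) := by
          rw [Nat.cast_sub hkn]
        rw [hcast, Real.exp_add, Real.exp_nat_mul, Real.exp_nat_mul, Real.exp_log hb0,
          Real.exp_log h1b]
      rw [e1]
      apply Real.exp_le_exp.mpr
      have hlog : Real.log (1 - β) ≤ Real.log β :=
        Real.log_le_log h1b (by linarith)
      have hhint : 0 ≤ ((S.card : ℝ) - β * n) * (Real.log β - Real.log (1 - β)) :=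
        mul_nonneg (by linarith) (by linarith)
      simp only [Real.binEntropy, Real.log_inv]
      nlinarith [hhint]
  have hw_nonneg : ∀ S : Finset (Fin n), 0 ≤ β ^ S.card * (1 - β) ^ (n - S.card) := by
    intro S
    have : (0:ℝ) ≤ β := by linarith
    have : (0:ℝ) ≤ 1 - β := by linarith
    positivity
  have key : (T.card : ℝ) * Real.exp (-(n * Real.binEntropy β)) ≤ 1 := by
    calc (T.card : ℝ) * Real.exp (-(n * Real.binEntropy β))
        = ∑ _S ∈ T, Real.exp (-(n * Real.binEntropy β)) := by
          rw [Finset.sum_const, nsmul_eq_mul]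
      _ ≤ ∑ S ∈ T, β ^ S.card * (1 - β) ^ (n - S.card) := Finset.sum_le_sum hterm
      _ ≤ ∑ S : Finset (Fin n), β ^ S.card * (1 - β) ^ (n - S.card) :=
          Finset.sum_le_sum_of_subset_of_nonneg (Finset.filter_subset _ _)
            (fun S _ _ => hw_nonneg S)
      _ = 1 := hw_sum
  have := mul_le_mul_of_nonneg_right key (Real.exp_pos (n * Real.binEntropy β)).le
  rwa [mul_assoc, ← Real.exp_add, neg_add_cancel, Real.exp_zero, mul_one, one_mul] at this

end GaussAux

/-- For a standard Gaussian vector `c ∈ ℝⁿ`, `α ∈ [0, 2√(ln 2)]` and `β ∈ [1/2, 1]` with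
`H(β) ≤ α²/4`, the probability that some `x ∈ {0,1}ⁿ` with `‖x‖₁ ≥ β n` satisfies
`cᵀx ≥ α n` is at most `exp (−α² n / 4)`. -/
theorem gaussian_cube_max_bound (n : ℕ) (α β : ℝ)
    (hα0 : 0 ≤ α) (hα1 : α ≤ 2 * Real.sqrt (Real.log 2))
    (hβ0 : 1 / 2 ≤ β) (hβ1 : β ≤ 1)
    (hH : Real.binEntropy β ≤ α ^ 2 / 4) :
    (Measure.pi fun _ : Fin n => gaussianReal 0 1)
        {c | ∃ x : Fin n → ℝ, (∀ i, x i = 0 ∨ x i = 1) ∧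
          β * n ≤ ∑ i, |x i| ∧ α * n ≤ ∑ i, c i * x i} ≤
      ENNReal.ofReal (Real.exp (-(α ^ 2 * n) / 4)) := by
  classical
  set P := Measure.pi fun _ : Fin n => gaussianReal 0 1 with hPdef
  set T := Finset.univ.filter fun S : Finset (Fin n) => β * n ≤ (S.card : ℝ) with hT
  have hsub : {c : Fin n → ℝ | ∃ x : Fin n → ℝ, (∀ i, x i = 0 ∨ x i = 1) ∧
        β * n ≤ ∑ i, |x i| ∧ α * n ≤ ∑ i, c i * x i}
      ⊆ ⋃ S ∈ T, {c : Fin n → ℝ | α * n ≤ ∑ i ∈ S, c i} := by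
    rintro c ⟨x, hx, h1, h2⟩
    set S := Finset.univ.filter fun i => x i = 1 with hS
    have hcard : (∑ i, |x i|) = (S.card : ℝ) := by
      calc ∑ i, |x i| = ∑ i : Fin n, (if x i = 1 then (1:ℝ) else 0) :=
            Finset.sum_congr rfl fun i _ => by rcases hx i with h | h <;> simp [h]
        _ = (S.card : ℝ) := by rw [Finset.sum_boole]
    have hsum : (∑ i, c i * x i) = ∑ i ∈ S, c i := by
      rw [hS, Finset.sum_filter]
      refine Finset.sum_congr rfl fun i _ => ?_
      rcases hx i with h | h <;> simp [h]
    have hmem : S ∈ T := Finset.mem_filter.mpr ⟨Finset.mem_univ _, by rw [← hcard]; exact h1⟩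
    exact Set.mem_biUnion hmem (by rw [Set.mem_setOf_eq, ← hsum]; exact h2)
  have h1 : P {c : Fin n → ℝ | ∃ x : Fin n → ℝ, (∀ i, x i = 0 ∨ x i = 1) ∧
        β * n ≤ ∑ i, |x i| ∧ α * n ≤ ∑ i, c i * x i}
      ≤ ∑ S ∈ T, P {c : Fin n → ℝ | α * n ≤ ∑ i ∈ S, c i} :=
    (measure_mono hsub).trans (measure_biUnion_finset_le T _)
  have h2 : ∀ S ∈ T, P {c : Fin n → ℝ | α * n ≤ ∑ i ∈ S, c i}
      ≤ ENNReal.ofReal (Real.exp (-(α ^ 2 * n) / 2)) := by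
    intro S _
    refine (chernoff_S S α (α * n) hα0).trans ?_
    apply ENNReal.ofReal_le_ofReal
    rw [← Real.exp_add]
    apply Real.exp_le_exp.mpr
    have hkn : (S.card : ℝ) ≤ n := by
      exact_mod_cast (by simpa [Fintype.card_fin] using Finset.card_le_univ S : S.card ≤ n)
    nlinarith [sq_nonneg α]
  have h3 : ∑ S ∈ T, P {c : Fin n → ℝ | α * n ≤ ∑ i ∈ S, c i}
      ≤ (T.card : ℝ≥0∞) * ENNReal.ofReal (Real.exp (-(α ^ 2 * n) / 2)) := by
    calc ∑ S ∈ T, P {c : Fin n → ℝ | α * n ≤ ∑ i ∈ S, c i}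
        ≤ ∑ _S ∈ T, ENNReal.ofReal (Real.exp (-(α ^ 2 * n) / 2)) := Finset.sum_le_sum h2
      _ = (T.card : ℝ≥0∞) * ENNReal.ofReal (Real.exp (-(α ^ 2 * n) / 2)) := by
          rw [Finset.sum_const, nsmul_eq_mul]
  have h4 : (T.card : ℝ≥0∞) * ENNReal.ofReal (Real.exp (-(α ^ 2 * n) / 2))
      ≤ ENNReal.ofReal (Real.exp (n * Real.binEntropy β))
        * ENNReal.ofReal (Real.exp (-(α ^ 2 * n) / 2)) := by
    gcongr
    rw [show ((T.card : ℝ≥0∞)) = ENNReal.ofReal (T.card : ℝ) from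
      (ENNReal.ofReal_natCast _).symm]
    exact ENNReal.ofReal_le_ofReal (count_entropy hβ0 hβ1)
  have h5 : ENNReal.ofReal (Real.exp (n * Real.binEntropy β))
        * ENNReal.ofReal (Real.exp (-(α ^ 2 * n) / 2))
      ≤ ENNReal.ofReal (Real.exp (-(α ^ 2 * n) / 4)) := by
    rw [← ENNReal.ofReal_mul (Real.exp_nonneg _), ← Real.exp_add]
    apply ENNReal.ofReal_le_ofReal
    apply Real.exp_le_exp.mpr
    have hn : (0:ℝ) ≤ n := Nat.cast_nonneg n
    have : (n:ℝ) * Real.binEntropy β ≤ n * (α ^ 2 / 4) :=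
      mul_le_mul_of_nonneg_left hH hn
    nlinarith
  exact h1.trans (h3.trans (h4.trans h5))
end

section
/- Let X be a real random variable with mean μ, variance σ², and a density ρ satisfying ρ(x) ≤ C/σ for all x, where C > 0. Then for every ε > 0, with δ = ε²/(12C), Pr[ dist(X, ℤ) ≥ δ·min(1, σ) ] ≥ 1 − ε, where dist(x, ℤ) = min over z ∈ ℤ of |x − z|. -/
set_option maxHeartbeats 1000000


open MeasureTheory ProbabilityTheory
open scoped ENNReal


lemma tsum_int_le_of_support_Ioo (f : ℤ → ℝ≥0∞) (a r : ℝ) (hr : 0 ≤ r)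
    (hf : ∀ z, f z ≤ 1)
    (h0 : ∀ z : ℤ, (z : ℝ) ∉ Set.Ioo (a - r) (a + r) → f z = 0) :
    ∑' z, f z ≤ ENNReal.ofReal (2 * r + 1) := by
  classical
  set F : Finset ℤ := Finset.Icc (⌊a - r⌋ + 1) (⌈a + r⌉ - 1) with hF
  have hsupp : ∀ z ∉ F, f z = 0 := by
    intro z hz
    by_contra h
    apply hz
    have hmem : (z : ℝ) ∈ Set.Ioo (a - r) (a + r) := by
      by_contra hm; exact h (h0 z hm)
    simp only [Set.mem_Ioo] at hmem
    rw [hF, Finset.mem_Icc]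
    constructor
    · exact Int.add_one_le_iff.mpr (Int.floor_lt.mpr hmem.1)
    · have : (z : ℝ) < (⌈a + r⌉ : ℝ) := lt_of_lt_of_le hmem.2 (Int.le_ceil _)
      have : z < ⌈a + r⌉ := by exact_mod_cast this
      omega
  rw [tsum_eq_sum hsupp]
  calc ∑ z ∈ F, f z ≤ ∑ _z ∈ F, 1 := Finset.sum_le_sum fun z _ => hf z
    _ = (F.card : ℝ≥0∞) := by simp
    _ ≤ ENNReal.ofReal (2 * r + 1) := by
        rw [← ENNReal.ofReal_natCast]
        apply ENNReal.ofReal_le_ofReal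
        have hcard : F.card = (⌈a + r⌉ - 1 + 1 - (⌊a - r⌋ + 1)).toNat := Int.card_Icc _ _
        have h1 : ((⌈a + r⌉ - 1 + 1 - (⌊a - r⌋ + 1)).toNat : ℝ) ≤ 2 * r + 1 := by
          have hc : (⌈a + r⌉ : ℝ) ≤ a + r + 1 := by
            have := Int.ceil_lt_add_one (a + r); linarith
          have hf2 : (a - r) - 1 ≤ (⌊a - r⌋ : ℝ) := by
            have := Int.sub_one_lt_floor (a - r); linarith
          rcases le_or_gt (⌈a + r⌉ - 1 + 1 - (⌊a - r⌋ + 1)) 0 with h | h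
          · rw [Int.toNat_of_nonpos h]; norm_num; linarith
          · have heq : ((⌈a + r⌉ - 1 + 1 - (⌊a - r⌋ + 1)).toNat : ℤ) = ⌈a + r⌉ - 1 + 1 - (⌊a - r⌋ + 1) := Int.toNat_of_nonneg h.le
            have : (((⌈a + r⌉ - 1 + 1 - (⌊a - r⌋ + 1)).toNat : ℕ) : ℝ) = ((⌈a + r⌉ : ℝ) - 1 + 1 - ((⌊a - r⌋ : ℝ) + 1)) := by
              rw [← Int.cast_natCast, heq]; push_cast; ring
            rw [this]; linarith
        rw [hcard]; exact h1

/-- If `X` has mean `μ`, variance `σ²` and a density bounded by `C/σ`, then for every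
`ε > 0`, with `δ = ε²/(12C)`, the distance from `X` to the nearest integer is at least
`δ · min 1 σ` with probability at least `1 − ε`. -/
theorem anticoncentration_of_bounded_density {Ω : Type*} [MeasurableSpace Ω]
    (P : Measure Ω) [IsProbabilityMeasure P] (X : Ω → ℝ) (hX : Measurable X)
    (μ σ C : ℝ) (hσ : 0 < σ) (hC : 0 < C)
    (hmean : ∫ ω, X ω ∂P = μ) (hvar : variance X P = σ ^ 2)
    (ρ : ℝ → ℝ) (hρ : ∀ t, 0 ≤ ρ t)
    (hdens : P.map X = volume.withDensity (fun t => ENNReal.ofReal (ρ t)))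
    (hbdd : ∀ t, ρ t ≤ C / σ)
    (ε : ℝ) (hε : 0 < ε) :
    ENNReal.ofReal (1 - ε) ≤
      P {ω | ∀ z : ℤ, ε ^ 2 / (12 * C) * min 1 σ ≤ |X ω - z|} := by
  -- trivial case
  rcases le_or_gt 1 ε with hε1 | hε1
  · rw [ENNReal.ofReal_of_nonpos (by linarith)]
    exact zero_le
  set ν : Measure ℝ := P.map X with hν
  haveI : IsProbabilityMeasure ν := Measure.isProbabilityMeasure_map hX.aemeasurable
  -- density bound on measures of sets
  have hIval : ∀ (I : Set ℝ), MeasurableSet I →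
      ν I ≤ ENNReal.ofReal (C / σ) * volume I := by
    intro I hI
    rw [hdens, withDensity_apply _ hI]
    calc ∫⁻ t in I, ENNReal.ofReal (ρ t) ∂volume
        ≤ ∫⁻ _t in I, ENNReal.ofReal (C / σ) ∂volume :=
          setLIntegral_mono measurable_const fun t _ => ENNReal.ofReal_le_ofReal (hbdd t)
      _ = ENNReal.ofReal (C / σ) * volume I := setLIntegral_const _ _
  -- total second moment
  have hmeas2 : Measurable fun x : ℝ => ENNReal.ofReal ((x - μ) ^ 2) := by fun_prop
  have htot : ∫⁻ x, ENNReal.ofReal ((x - μ) ^ 2) ∂ν = ENNReal.ofReal (σ ^ 2) := by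
    have h2 : ∀ a : ℝ, ENNReal.ofReal ((a - μ) ^ 2) = (‖a - μ‖₊ : ℝ≥0∞) ^ 2 := by
      intro a
      rw [← enorm_eq_nnnorm, Real.enorm_eq_ofReal_abs, ← ENNReal.ofReal_pow (abs_nonneg _), sq_abs]
    have hev : evariance X P = ∫⁻ ω, ENNReal.ofReal ((X ω - μ) ^ 2) ∂P := by
      rw [evariance, hmean]
      simp_rw [h2]
      rfl
    have hfin : evariance X P ≠ ⊤ := by
      intro h
      have hv : variance X P = 0 := by rw [variance, h, ENNReal.toReal_top]
      rw [hvar] at hv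
      nlinarith
    calc ∫⁻ x, ENNReal.ofReal ((x - μ) ^ 2) ∂ν
        = ∫⁻ ω, ENNReal.ofReal ((X ω - μ) ^ 2) ∂P := by rw [hν, lintegral_map hmeas2 hX]
      _ = evariance X P := hev.symm
      _ = ENNReal.ofReal (σ ^ 2) := by
          rw [← hvar]
          exact (ENNReal.ofReal_toReal hfin).symm
  -- lower bound on C
  have hC940 : 9 / 40 ≤ C := by
    set t1 : ℝ := 6 * σ / (23 * C) with ht1
    set t2 : ℝ := 9 * σ / (23 * C) with ht2
    have ht10 : 0 < t1 := by positivity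
    have ht20 : 0 < t2 := by positivity
    have ht12 : t1 ≤ t2 := by
      rw [ht1, ht2]
      gcongr
      linarith
    set I1 : Set ℝ := Set.Icc (μ - t1) (μ + t1) with hI1def
    set I2 : Set ℝ := Set.Icc (μ - t2) (μ + t2) with hI2def
    have hI12 : I1 ⊆ I2 := Set.Icc_subset_Icc (by linarith) (by linarith)
    have hIeval : ∀ t : ℝ, 0 < t →
        ν (Set.Icc (μ - t) (μ + t)) ≤ ENNReal.ofReal (C / σ * (2 * t)) := by
      intro t ht
      calc ν (Set.Icc (μ - t) (μ + t))
          ≤ ENNReal.ofReal (C / σ) * volume (Set.Icc (μ - t) (μ + t)) :=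
            hIval _ measurableSet_Icc
        _ = ENNReal.ofReal (C / σ * (2 * t)) := by
            rw [Real.volume_Icc, ← ENNReal.ofReal_mul (by positivity)]
            congr 1
            ring
    have hνI1 : ν I1 ≤ ENNReal.ofReal (12 / 23) := by
      have he : C / σ * (2 * t1) = 12 / 23 := by
        rw [ht1]
        field_simp
        ring
      have := hIeval t1 ht10
      rwa [he] at this
    have hνI2 : ν I2 ≤ ENNReal.ofReal (18 / 23) := by
      have he : C / σ * (2 * t2) = 18 / 23 := by
        rw [ht2]
        field_simp
        ring
      have := hIeval t2 ht20
      rwa [he] at this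
    have hsplit : ENNReal.ofReal (t1 ^ 2) * ν (I2 \ I1) + ENNReal.ofReal (t2 ^ 2) * ν I2ᶜ
        ≤ ENNReal.ofReal (σ ^ 2) := by
      rw [← htot]
      have hle1 : ENNReal.ofReal (t1 ^ 2) * ν (I2 \ I1)
          ≤ ∫⁻ x in I2 \ I1, ENNReal.ofReal ((x - μ) ^ 2) ∂ν := by
        rw [← setLIntegral_const]
        refine setLIntegral_mono hmeas2 ?_
        intro x hx
        apply ENNReal.ofReal_le_ofReal
        have hx1 : x ∉ I1 := hx.2
        rw [hI1def, Set.mem_Icc] at hx1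
        push_neg at hx1
        rcases le_or_gt (μ - t1) x with h | h
        · have := hx1 h
          nlinarith
        · nlinarith
      have hle2 : ENNReal.ofReal (t2 ^ 2) * ν I2ᶜ
          ≤ ∫⁻ x in I2ᶜ, ENNReal.ofReal ((x - μ) ^ 2) ∂ν := by
        rw [← setLIntegral_const]
        refine setLIntegral_mono hmeas2 ?_
        intro x hx
        apply ENNReal.ofReal_le_ofReal
        rw [hI2def, Set.mem_compl_iff, Set.mem_Icc] at hx
        push_neg at hx
        rcases le_or_gt (μ - t2) x with h | h
        · have := hx h
          nlinarith
        · nlinarith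
      calc ENNReal.ofReal (t1 ^ 2) * ν (I2 \ I1) + ENNReal.ofReal (t2 ^ 2) * ν I2ᶜ
          ≤ (∫⁻ x in I2 \ I1, ENNReal.ofReal ((x - μ) ^ 2) ∂ν)
            + ∫⁻ x in I2ᶜ, ENNReal.ofReal ((x - μ) ^ 2) ∂ν := add_le_add hle1 hle2
        _ = ∫⁻ x in (I2 \ I1) ∪ I2ᶜ, ENNReal.ofReal ((x - μ) ^ 2) ∂ν := by
            rw [lintegral_union (measurableSet_Icc.compl) ?_]
            exact Set.disjoint_of_subset_left Set.diff_subset disjoint_compl_right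
        _ ≤ ∫⁻ x, ENNReal.ofReal ((x - μ) ^ 2) ∂ν := setLIntegral_le_lintegral _ _
    -- convert to reals
    set p1 : ℝ := (ν I1).toReal with hp1def
    set p2 : ℝ := (ν I2).toReal with hp2def
    have hp10 : 0 ≤ p1 := ENNReal.toReal_nonneg
    have hp1 : p1 ≤ 12 / 23 :=
      ENNReal.toReal_le_of_le_ofReal (by norm_num) hνI1
    have hp2 : p2 ≤ 18 / 23 :=
      ENNReal.toReal_le_of_le_ofReal (by norm_num) hνI2
    have hp12 : p1 ≤ p2 :=
      ENNReal.toReal_mono (measure_ne_top _ _) (measure_mono hI12)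
    have hdiff : (ν (I2 \ I1)).toReal = p2 - p1 := by
      rw [measure_diff hI12 measurableSet_Icc.nullMeasurableSet (measure_ne_top _ _),
        ENNReal.toReal_sub_of_le (measure_mono hI12) (measure_ne_top _ _)]
    have hcompl : (ν I2ᶜ).toReal = 1 - p2 := by
      rw [measure_compl measurableSet_Icc (measure_ne_top _ _), measure_univ,
        ENNReal.toReal_sub_of_le prob_le_one ENNReal.one_ne_top]
      simp
      rfl
    have hreal : t1 ^ 2 * (p2 - p1) + t2 ^ 2 * (1 - p2) ≤ σ ^ 2 := by
      have hfin1 : ENNReal.ofReal (t1 ^ 2) * ν (I2 \ I1) ≠ ⊤ :=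
        ENNReal.mul_ne_top ENNReal.ofReal_ne_top (measure_ne_top _ _)
      have hfin2 : ENNReal.ofReal (t2 ^ 2) * ν I2ᶜ ≠ ⊤ :=
        ENNReal.mul_ne_top ENNReal.ofReal_ne_top (measure_ne_top _ _)
      calc t1 ^ 2 * (p2 - p1) + t2 ^ 2 * (1 - p2)
          = (ENNReal.ofReal (t1 ^ 2) * ν (I2 \ I1)
              + ENNReal.ofReal (t2 ^ 2) * ν I2ᶜ).toReal := by
            rw [ENNReal.toReal_add hfin1 hfin2, ENNReal.toReal_mul, ENNReal.toReal_mul,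
              ENNReal.toReal_ofReal (sq_nonneg _), ENNReal.toReal_ofReal (sq_nonneg _),
              hdiff, hcompl]
        _ ≤ (ENNReal.ofReal (σ ^ 2)).toReal :=
            ENNReal.toReal_mono ENNReal.ofReal_ne_top hsplit
        _ = σ ^ 2 := ENNReal.toReal_ofReal (sq_nonneg σ)
    -- algebra
    set u : ℝ := σ / (23 * C) with hu
    have hu0 : 0 < u := by positivity
    have hσu : σ = 23 * C * u := by
      rw [hu]
      field_simp
    have ht1u : t1 = 6 * u := by rw [ht1, hu]; ring
    have ht2u : t2 = 9 * u := by rw [ht2, hu]; ring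
    rw [ht1u, ht2u, hσu] at hreal
    have e1 : p1 * u ^ 2 ≤ 12 / 23 * u ^ 2 :=
      mul_le_mul_of_nonneg_right hp1 (sq_nonneg u)
    have e2 : p2 * u ^ 2 ≤ 18 / 23 * u ^ 2 :=
      mul_le_mul_of_nonneg_right hp2 (sq_nonneg u)
    have h27 : 27 * u ^ 2 ≤ 529 * C ^ 2 * u ^ 2 := by nlinarith [hreal, e1, e2]
    have hu2 : 0 < u ^ 2 := by positivity
    have h27' : 27 ≤ 529 * C ^ 2 := le_of_mul_le_mul_right h27 hu2
    by_contra hcon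
    push_neg at hcon
    nlinarith [mul_lt_mul'' hcon hcon hC.le hC.le]
  -- main quantities
  set m : ℝ := min 1 σ with hm
  have hm0 : 0 < m := lt_min one_pos hσ
  have hm1 : m ≤ 1 := min_le_left _ _
  have hmσ : m ≤ σ := min_le_right _ _
  set δ : ℝ := ε ^ 2 / (12 * C) * m with hδ
  have hδ0 : 0 < δ := by positivity
  have hδδ : δ ≤ 10 / 27 * (ε ^ 2 * m) := by
    rw [hδ]
    rw [div_mul_eq_mul_div, div_le_iff₀ (by positivity)]
    nlinarith [mul_nonneg (mul_nonneg (sq_nonneg ε) hm0.le) (by linarith : (0:ℝ) ≤ C - 9/40)]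
  have hε2 : ε ^ 2 ≤ 1 := by nlinarith
  have hδhalf : δ ≤ 10 / 27 := by nlinarith [hδδ, mul_nonneg (sq_nonneg ε) hm0.le]
  set q : ℝ := ε ^ ((1:ℝ)/3) with hq
  have hq0 : 0 < q := Real.rpow_pos_of_pos hε _
  have hq1 : q ≤ 1 := Real.rpow_le_one hε.le hε1.le (by norm_num)
  have hq3 : q ^ 3 = ε := by
    rw [hq, ← Real.rpow_natCast (ε ^ ((1:ℝ)/3)) 3, ← Real.rpow_mul hε.le]
    norm_num
  set L : ℝ := 3 / 10 * q ^ 4 / σ ^ 2 with hL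
  have hL0 : 0 < L := by positivity
  set r3 : ℝ := Real.sqrt (3 / 10) with hr3
  have hr30 : 0 < r3 := Real.sqrt_pos.mpr (by norm_num)
  have hr3sq : r3 ^ 2 = 3 / 10 := Real.sq_sqrt (by norm_num)
  have hr3lb : 45 / 83 ≤ r3 := by
    rw [hr3, show (45:ℝ)/83 = Real.sqrt ((45/83)^2) from (Real.sqrt_sq (by norm_num)).symm]
    apply Real.sqrt_le_sqrt
    norm_num
  have hsqrtL : Real.sqrt L = r3 * q ^ 2 / σ := by
    rw [show L = (r3 * q ^ 2 / σ) ^ 2 from by rw [div_pow, mul_pow, hr3sq, hL]; ring]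
    exact Real.sqrt_sq (by positivity)
  set s : ℝ := ε ^ 2 * m / (6 * σ) with hs
  have hs0 : 0 < s := by positivity
  set B : ℤ → Set ℝ := fun z => Set.Ioo ((z:ℝ) - δ) ((z:ℝ) + δ) with hB
  have hball_meas : ∀ z : ℤ, ν (B z) ≤ ENNReal.ofReal s := by
    intro z
    calc ν (B z) ≤ ENNReal.ofReal (C / σ) * volume (B z) := hIval _ measurableSet_Ioo
      _ = ENNReal.ofReal (C / σ * (2 * δ)) := by
          rw [hB]
          simp only
          rw [Real.volume_Ioo, ← ENNReal.ofReal_mul (by positivity)]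
          congr 1
          ring
      _ = ENNReal.ofReal s := by
          congr 1
          rw [hs, hδ]
          field_simp
          ring
  set ψ : ℤ → ℝ := fun z => max (1 - L * max (|(z:ℝ) - μ| - δ) 0 ^ 2) 0 with hψ
  have hψ0 : ∀ z, 0 ≤ ψ z := fun z => le_max_right _ _
  have hψ1 : ∀ z, ψ z ≤ 1 := by
    intro z
    rw [hψ]
    simp only
    apply max_le _ zero_le_one
    nlinarith [mul_nonneg hL0.le (sq_nonneg (max (|(z:ℝ) - μ| - δ) 0))]
  set W : ℤ → ℝ≥0∞ :=
    fun z => ∫⁻ x in B z, ENNReal.ofReal ((x - μ) ^ 2) ∂ν with hW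
  have habs : ∀ (z : ℤ) (x : ℝ), x ∈ B z → max (|(z:ℝ) - μ| - δ) 0 ≤ |x - μ| := by
    intro z x hx
    rw [hB] at hx
    simp only [Set.mem_Ioo] at hx
    apply max_le _ (abs_nonneg _)
    have h1 : |(z:ℝ) - μ| ≤ |(z:ℝ) - x| + |x - μ| := abs_sub_le _ _ _
    have h2 : |(z:ℝ) - x| ≤ δ := by
      rw [abs_le]
      constructor <;> linarith [hx.1, hx.2]
    linarith
  have hball : ∀ z : ℤ,
      ν (B z) ≤ ENNReal.ofReal L * W z + ENNReal.ofReal (s * ψ z) := by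
    intro z
    set d : ℝ := max (|(z:ℝ) - μ| - δ) 0 with hd
    have hd0 : 0 ≤ d := le_max_right _ _
    have hWlb : ENNReal.ofReal (d ^ 2) * ν (B z) ≤ W z := by
      rw [hW]
      simp only
      rw [← setLIntegral_const]
      refine setLIntegral_mono hmeas2 ?_
      intro x hx
      apply ENNReal.ofReal_le_ofReal
      have h1 := habs z x hx
      have h2 : d * d ≤ |x - μ| * |x - μ| := mul_le_mul h1 h1 hd0 (abs_nonneg _)
      nlinarith [h2, abs_mul_abs_self (x - μ)]
    have hψz_eq : ψ z = max (1 - L * d ^ 2) 0 := rfl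
    rcases lt_or_ge (L * d ^ 2) 1 with hcase | hcase
    · have hψz : ψ z = 1 - L * d ^ 2 := by rw [hψz_eq, max_eq_left (by linarith)]
      have hsum : ENNReal.ofReal (L * d ^ 2) + ENNReal.ofReal (1 - L * d ^ 2) = 1 := by
        rw [← ENNReal.ofReal_add (by positivity) (by linarith)]
        norm_num
      calc ν (B z) = (ENNReal.ofReal (L * d ^ 2) + ENNReal.ofReal (1 - L * d ^ 2)) * ν (B z) := by
            rw [hsum, one_mul]
        _ = ENNReal.ofReal (L * d ^ 2) * ν (B z)
            + ENNReal.ofReal (1 - L * d ^ 2) * ν (B z) := add_mul _ _ _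
        _ ≤ ENNReal.ofReal L * W z + ENNReal.ofReal (s * ψ z) := by
            apply add_le_add
            · rw [ENNReal.ofReal_mul hL0.le, mul_assoc]
              exact mul_le_mul_right hWlb _
            · calc ENNReal.ofReal (1 - L * d ^ 2) * ν (B z)
                  ≤ ENNReal.ofReal (1 - L * d ^ 2) * ENNReal.ofReal s :=
                    mul_le_mul_right (hball_meas z) _
                _ = ENNReal.ofReal (s * ψ z) := by
                    rw [← ENNReal.ofReal_mul (by linarith), hψz]
                    congr 1
                    ring
    · have h1le : (1:ℝ≥0∞) ≤ ENNReal.ofReal (L * d ^ 2) := by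
        rw [← ENNReal.ofReal_one]
        exact ENNReal.ofReal_le_ofReal hcase
      calc ν (B z) ≤ ENNReal.ofReal (L * d ^ 2) * ν (B z) := by
            nth_rewrite 1 [← one_mul (ν (B z))]
            exact mul_le_mul_left h1le _
        _ ≤ ENNReal.ofReal L * W z := by
            rw [ENNReal.ofReal_mul hL0.le, mul_assoc]
            exact mul_le_mul_right hWlb _
        _ ≤ ENNReal.ofReal L * W z + ENNReal.ofReal (s * ψ z) := le_self_add
  have hdisj : Pairwise (Function.onFun Disjoint B) := by
    intro i j hij
    simp only [Function.onFun, hB]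
    rw [Set.disjoint_left]
    intro x hx hx'
    simp only [Set.mem_Ioo] at hx hx'
    have hij1 : (1:ℤ) ≤ |i - j| := Int.one_le_abs (sub_ne_zero.mpr hij)
    have hij1' : (1:ℝ) ≤ |(i:ℝ) - (j:ℝ)| := by
      calc (1:ℝ) = ((1:ℤ):ℝ) := by norm_num
        _ ≤ ((|i - j| : ℤ) : ℝ) := by exact_mod_cast hij1
        _ = |(i:ℝ) - (j:ℝ)| := by push_cast [Int.cast_abs]; norm_num
    have : |(i:ℝ) - (j:ℝ)| < 1 := by
      rw [abs_lt]
      constructor <;> linarith [hδhalf, hx.1, hx.2, hx'.1, hx'.2]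
    linarith
  have hWsum : ∑' z : ℤ, W z ≤ ENNReal.ofReal (σ ^ 2) := by
    rw [← htot, hW]
    rw [← lintegral_iUnion (fun _ => measurableSet_Ioo) hdisj]
    exact setLIntegral_le_lintegral _ _
  -- layer-cake bound on the sum of ψ
  have hsqint : ∫⁻ u in Set.Ioo (0:ℝ) 1, ENNReal.ofReal (Real.sqrt (1 - u)) ∂volume
      = ENNReal.ofReal (2 / 3) := by
    have hcont : Continuous fun u : ℝ => Real.sqrt (1 - u) :=
      Real.continuous_sqrt.comp (continuous_const.sub continuous_id)
    have hint : IntegrableOn (fun u : ℝ => Real.sqrt (1 - u)) (Set.Ioo (0:ℝ) 1) volume :=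
      (hcont.integrableOn_Icc).mono_set Set.Ioo_subset_Icc_self
    rw [← MeasureTheory.ofReal_integral_eq_lintegral_ofReal hint
      (Filter.Eventually.of_forall fun u => Real.sqrt_nonneg _)]
    congr 1
    have h1 : ∫ u in Set.Ioo (0:ℝ) 1, Real.sqrt (1 - u)
        = ∫ u in (0:ℝ)..1, Real.sqrt (1 - u) := by
      rw [intervalIntegral.integral_of_le (by norm_num : (0:ℝ) ≤ 1),
        MeasureTheory.integral_Ioc_eq_integral_Ioo]
    rw [h1, intervalIntegral.integral_comp_sub_left (fun x => Real.sqrt x) 1]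
    norm_num
    have h2 : ∫ x in (0:ℝ)..1, Real.sqrt x = ∫ x in (0:ℝ)..1, x ^ ((1:ℝ)/2) := by
      apply intervalIntegral.integral_congr
      intro x _
      exact Real.sqrt_eq_rpow x
    rw [h2, integral_rpow (Or.inl (by norm_num))]
    rw [Real.one_rpow, Real.zero_rpow (by norm_num)]
    norm_num
  have hT : ∑' z : ℤ, ENNReal.ofReal (ψ z)
      ≤ ENNReal.ofReal (2 * δ + 1)
        + ENNReal.ofReal (2 / Real.sqrt L) * ENNReal.ofReal (2 / 3) := by
    have hrepr : ∀ z : ℤ, ENNReal.ofReal (ψ z)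
        = ∫⁻ u, (Set.Ioo (0:ℝ) (ψ z)).indicator (fun _ => (1:ℝ≥0∞)) u ∂volume := by
      intro z
      rw [lintegral_indicator measurableSet_Ioo _, setLIntegral_one, Real.volume_Ioo]
      rw [sub_zero]
    have hswap : ∑' z : ℤ, ENNReal.ofReal (ψ z)
        = ∫⁻ u, ∑' z : ℤ, (Set.Ioo (0:ℝ) (ψ z)).indicator (fun _ => (1:ℝ≥0∞)) u ∂volume := by
      rw [tsum_congr hrepr]
      exact (lintegral_tsum fun z =>
        (measurable_const.indicator measurableSet_Ioo).aemeasurable).symm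
    rw [hswap]
    have hbound : ∀ u : ℝ, (∑' z : ℤ, (Set.Ioo (0:ℝ) (ψ z)).indicator (fun _ => (1:ℝ≥0∞)) u)
        ≤ (Set.Ioo (0:ℝ) 1).indicator
            (fun u => ENNReal.ofReal (2 * (δ + Real.sqrt ((1 - u) / L)) + 1)) u := by
      intro u
      by_cases hu : u ∈ Set.Ioo (0:ℝ) 1
      · rw [Set.indicator_of_mem hu]
        simp only [Set.mem_Ioo] at hu
        apply tsum_int_le_of_support_Ioo _ μ (δ + Real.sqrt ((1 - u) / L)) (by positivity)
        · intro z
          by_cases h : u ∈ Set.Ioo (0:ℝ) (ψ z)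
          · rw [Set.indicator_of_mem h]
          · rw [Set.indicator_of_notMem h]
            exact zero_le_one
        · intro z hz
          apply Set.indicator_of_notMem
          intro hmem
          apply hz
          simp only [Set.mem_Ioo] at hmem
          set d : ℝ := max (|(z:ℝ) - μ| - δ) 0 with hd
          have hd0 : 0 ≤ d := le_max_right _ _
          have hψz : ψ z = max (1 - L * d ^ 2) 0 := rfl
          have hppos : u < ψ z := hmem.2
          have hψpos : (0:ℝ) < ψ z := lt_trans hmem.1 hppos
          have hψeq : ψ z = 1 - L * d ^ 2 := by
            rcases max_cases (1 - L * d ^ 2) (0:ℝ) with ⟨h1, _⟩ | ⟨h1, _⟩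
            · rw [hψz, h1]
            · exfalso; rw [hψz, h1] at hψpos; exact lt_irrefl _ hψpos
          have hLd : L * d ^ 2 < 1 - u := by
            rw [hψeq] at hppos
            linarith
          have hdsq : d ^ 2 < (1 - u) / L := by
            rw [lt_div_iff₀ hL0]
            linarith [hLd]
          have hdlt : d < Real.sqrt ((1 - u) / L) := by
            rw [← Real.sqrt_sq hd0]
            exact Real.sqrt_lt_sqrt (sq_nonneg d) hdsq
          have habs2 : |(z:ℝ) - μ| < δ + Real.sqrt ((1 - u) / L) := by
            have : |(z:ℝ) - μ| - δ ≤ d := le_max_left _ _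
            linarith
          rw [Set.mem_Ioo]
          rw [abs_lt] at habs2
          constructor <;> linarith [habs2.1, habs2.2]
      · rw [Set.indicator_of_notMem hu]
        apply le_of_eq
        have hz0 : ∀ z : ℤ, (Set.Ioo (0:ℝ) (ψ z)).indicator (fun _ => (1:ℝ≥0∞)) u = 0 := by
          intro z
          apply Set.indicator_of_notMem
          intro hmem
          apply hu
          simp only [Set.mem_Ioo] at hmem ⊢
          exact ⟨hmem.1, lt_of_lt_of_le hmem.2 (hψ1 z)⟩
        rw [tsum_congr hz0]
        exact tsum_zero
    calc ∫⁻ u, ∑' z : ℤ, (Set.Ioo (0:ℝ) (ψ z)).indicator (fun _ => (1:ℝ≥0∞)) u ∂volume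
        ≤ ∫⁻ u, (Set.Ioo (0:ℝ) 1).indicator
            (fun u => ENNReal.ofReal (2 * (δ + Real.sqrt ((1 - u) / L)) + 1)) u ∂volume :=
          lintegral_mono hbound
      _ = ∫⁻ u in Set.Ioo (0:ℝ) 1,
            ENNReal.ofReal (2 * (δ + Real.sqrt ((1 - u) / L)) + 1) ∂volume := by
          rw [lintegral_indicator measurableSet_Ioo _]
      _ = ∫⁻ u in Set.Ioo (0:ℝ) 1,
            (ENNReal.ofReal (2 * δ + 1)
              + ENNReal.ofReal (2 / Real.sqrt L) * ENNReal.ofReal (Real.sqrt (1 - u))) ∂volume := by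
          apply setLIntegral_congr_fun measurableSet_Ioo
          intro u hu
          simp only [Set.mem_Ioo] at hu
          beta_reduce
          rw [← ENNReal.ofReal_mul (by positivity), ← ENNReal.ofReal_add (by positivity)
            (by positivity)]
          congr 1
          rw [Real.sqrt_div (by linarith) L, hsqrtL]
          have hrq : r3 * q ^ 2 / σ > 0 := by positivity
          field_simp
          ring
      _ ≤ ENNReal.ofReal (2 * δ + 1)
          + ENNReal.ofReal (2 / Real.sqrt L) * ENNReal.ofReal (2 / 3) := by
          have hmsq : Measurable fun u : ℝ => ENNReal.ofReal (Real.sqrt (1 - u)) := by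
            apply ENNReal.measurable_ofReal.comp
            exact (Real.continuous_sqrt.comp (continuous_const.sub continuous_id)).measurable
          rw [lintegral_add_left measurable_const, setLIntegral_const,
            lintegral_const_mul _ hmsq, hsqint]
          rw [Real.volume_Ioo]
          norm_num
  -- the good set
  set S : Set ℝ := {x : ℝ | ∀ z : ℤ, δ ≤ |x - (z:ℝ)|} with hSdef
  have hSmeas : MeasurableSet S := by
    have : S = ⋂ z : ℤ, {x : ℝ | δ ≤ |x - (z:ℝ)|} := by
      ext x
      simp [hSdef]
    rw [this]
    exact MeasurableSet.iInter fun z =>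
      measurableSet_le measurable_const ((measurable_id.sub_const _).abs)
  have hPgood : P {ω | ∀ z : ℤ, δ ≤ |X ω - (z:ℝ)|} = ν S := by
    rw [hν, Measure.map_apply hX hSmeas]
    rfl
  have hcomplsub : Sᶜ ⊆ ⋃ z : ℤ, B z := by
    intro x hx
    simp only [hSdef, Set.mem_compl_iff, Set.mem_setOf_eq, not_forall, not_le] at hx
    obtain ⟨z, hz⟩ := hx
    refine Set.mem_iUnion.mpr ⟨z, ?_⟩
    rw [hB]
    simp only [Set.mem_Ioo]
    rw [abs_lt] at hz
    constructor <;> linarith [hz.1, hz.2]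
  have hbadsum : ν Sᶜ ≤ ENNReal.ofReal L * ENNReal.ofReal (σ ^ 2)
      + ENNReal.ofReal s * ∑' z : ℤ, ENNReal.ofReal (ψ z) := by
    calc ν Sᶜ ≤ ν (⋃ z : ℤ, B z) := measure_mono hcomplsub
      _ ≤ ∑' z : ℤ, ν (B z) := measure_iUnion_le _
      _ ≤ ∑' z : ℤ, (ENNReal.ofReal L * W z + ENNReal.ofReal (s * ψ z)) :=
          ENNReal.tsum_le_tsum hball
      _ = ENNReal.ofReal L * (∑' z : ℤ, W z)
          + ∑' z : ℤ, ENNReal.ofReal s * ENNReal.ofReal (ψ z) := by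
          rw [ENNReal.tsum_add, ENNReal.tsum_mul_left]
          congr 1
          apply tsum_congr
          intro z
          rw [← ENNReal.ofReal_mul hs0.le]
      _ = ENNReal.ofReal L * (∑' z : ℤ, W z)
          + ENNReal.ofReal s * ∑' z : ℤ, ENNReal.ofReal (ψ z) := by
          rw [ENNReal.tsum_mul_left]
      _ ≤ ENNReal.ofReal L * ENNReal.ofReal (σ ^ 2)
          + ENNReal.ofReal s * ∑' z : ℤ, ENNReal.ofReal (ψ z) := by
          gcongr
  have hfinal : ν Sᶜ ≤ ENNReal.ofReal
      (L * σ ^ 2 + s * ((2 * δ + 1) + 2 / Real.sqrt L * (2 / 3))) := by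
    calc ν Sᶜ ≤ ENNReal.ofReal L * ENNReal.ofReal (σ ^ 2)
        + ENNReal.ofReal s * ∑' z : ℤ, ENNReal.ofReal (ψ z) := hbadsum
      _ ≤ ENNReal.ofReal L * ENNReal.ofReal (σ ^ 2)
          + ENNReal.ofReal s * (ENNReal.ofReal (2 * δ + 1)
            + ENNReal.ofReal (2 / Real.sqrt L) * ENNReal.ofReal (2 / 3)) := by gcongr
      _ = ENNReal.ofReal
          (L * σ ^ 2 + s * ((2 * δ + 1) + 2 / Real.sqrt L * (2 / 3))) := by
          rw [← ENNReal.ofReal_mul hL0.le, ← ENNReal.ofReal_mul (by positivity),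
            ← ENNReal.ofReal_add (by positivity) (by positivity),
            ← ENNReal.ofReal_mul hs0.le,
            ← ENNReal.ofReal_add (by positivity) (by positivity)]
  -- final arithmetic
  have hG : L * σ ^ 2 + s * ((2 * δ + 1) + 2 / Real.sqrt L * (2 / 3)) ≤ ε := by
    have hεq : ε = q ^ 3 := hq3.symm
    have es : s = q ^ 6 * m / (6 * σ) := by rw [hs, hεq]; ring
    have e1 : L * σ ^ 2 = 3 / 10 * q ^ 4 := by
      rw [hL]
      field_simp
    have e2 : s * (2 / Real.sqrt L * (2 / 3)) = 2 / 9 * q ^ 4 * m / r3 := by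
      rw [hsqrtL, es]
      field_simp
      ring
    have e2b : 2 / 9 * q ^ 4 * m / r3 ≤ 166 / 405 * q ^ 4 * m := by
      rw [div_le_iff₀ hr30]
      nlinarith [mul_le_mul_of_nonneg_left hr3lb
        (by positivity : (0:ℝ) ≤ 166 / 405 * q ^ 4 * m)]
    have hδq : δ ≤ 10 / 27 * (q ^ 6 * m) := by
      rw [hεq] at hδδ
      calc δ ≤ 10 / 27 * ((q ^ 3) ^ 2 * m) := hδδ
        _ = 10 / 27 * (q ^ 6 * m) := by ring
    have hk1 : m / σ ≤ 1 := (div_le_one hσ).mpr hmσ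
    have hk0 : 0 ≤ m / σ := by positivity
    have es2 : s = q ^ 6 / 6 * (m / σ) := by rw [es]; ring
    have e3 : s * (2 * δ + 1) ≤ 10 / 81 * q ^ 12 + 1 / 6 * q ^ 6 := by
      rw [es2]
      have hmm : m * (m / σ) ≤ 1 := by
        calc m * (m / σ) ≤ 1 * 1 := mul_le_mul hm1 hk1 hk0 zero_le_one
          _ = 1 := mul_one 1
      have hδ2 : 2 * δ + 1 ≤ 20 / 27 * (q ^ 6 * m) + 1 := by linarith
      calc q ^ 6 / 6 * (m / σ) * (2 * δ + 1)
          ≤ q ^ 6 / 6 * (m / σ) * (20 / 27 * (q ^ 6 * m) + 1) := by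
            apply mul_le_mul_of_nonneg_left hδ2 (by positivity)
        _ = 10 / 81 * q ^ 12 * (m * (m / σ)) + 1 / 6 * q ^ 6 * (m / σ) := by ring
        _ ≤ 10 / 81 * q ^ 12 * 1 + 1 / 6 * q ^ 6 * 1 := by
            apply add_le_add
            · exact mul_le_mul_of_nonneg_left hmm (by positivity)
            · exact mul_le_mul_of_nonneg_left hk1 (by positivity)
        _ = 10 / 81 * q ^ 12 + 1 / 6 * q ^ 6 := by ring
    have hq43 : q ^ 4 ≤ q ^ 3 := pow_le_pow_of_le_one hq0.le hq1 (by norm_num)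
    have hq64 : q ^ 6 ≤ q ^ 4 := pow_le_pow_of_le_one hq0.le hq1 (by norm_num)
    have hq124 : q ^ 12 ≤ q ^ 4 := pow_le_pow_of_le_one hq0.le hq1 (by norm_num)
    have e2c : s * (2 / Real.sqrt L * (2 / 3)) ≤ 166 / 405 * q ^ 4 := by
      rw [e2]
      calc 2 / 9 * q ^ 4 * m / r3 ≤ 166 / 405 * q ^ 4 * m := e2b
        _ ≤ 166 / 405 * q ^ 4 * 1 := by
            apply mul_le_mul_of_nonneg_left hm1 (by positivity)
        _ = 166 / 405 * q ^ 4 := mul_one _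
    calc L * σ ^ 2 + s * ((2 * δ + 1) + 2 / Real.sqrt L * (2 / 3))
        = L * σ ^ 2 + s * (2 * δ + 1) + s * (2 / Real.sqrt L * (2 / 3)) := by ring
      _ ≤ 3 / 10 * q ^ 4 + (10 / 81 * q ^ 12 + 1 / 6 * q ^ 6) + 166 / 405 * q ^ 4 := by
          rw [e1]
          exact add_le_add (add_le_add le_rfl e3) e2c
      _ ≤ 3 / 10 * q ^ 4 + (10 / 81 * q ^ 4 + 1 / 6 * q ^ 4) + 166 / 405 * q ^ 4 := by
          gcongr
      _ = q ^ 4 := by ring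
      _ ≤ q ^ 3 := hq43
      _ = ε := hq3
  -- conclusion
  have hbad : ν Sᶜ ≤ ENNReal.ofReal ε :=
    le_trans hfinal (ENNReal.ofReal_le_ofReal hG)
  have hgoal2 : ENNReal.ofReal (1 - ε) ≤ ν S := by
    have hadd : ν S + ν Sᶜ = 1 := by
      rw [measure_add_measure_compl hSmeas]
      exact measure_univ
    have hS1 : ν S = 1 - ν Sᶜ :=
      ENNReal.eq_sub_of_add_eq (measure_ne_top _ _) hadd
    have hε_add : ENNReal.ofReal (1 - ε) + ENNReal.ofReal ε = 1 := by
      rw [← ENNReal.ofReal_add (by linarith) hε.le]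
      norm_num
    have hε_sub : ENNReal.ofReal (1 - ε) = 1 - ENNReal.ofReal ε :=
      ENNReal.eq_sub_of_add_eq ENNReal.ofReal_ne_top hε_add
    rw [hS1, hε_sub]
    exact tsub_le_tsub_left hbad 1
  calc ENNReal.ofReal (1 - ε) ≤ ν S := hgoal2
    _ = P {ω | ∀ z : ℤ, δ ≤ |X ω - (z:ℝ)|} := hPgood.symm
    _ = P {ω | ∀ z : ℤ, ε ^ 2 / (12 * C) * min 1 σ ≤ |X ω - (z:ℝ)|} := rfl
end

section
/- Let f(x) = arctan( p·sin(2πx) / (p·cos(2πx) + (1−p)) ) for 0 < p ≤ 0.1. Then f(0) = 0, f'(0) = 2πp, f''(0) = 0, and for all x, |f(x) − 2πp·x| ≤ 50·p·|x|³. -/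
open Real

noncomputable def phF (p : ℝ) (x : ℝ) : ℝ :=
  Real.arctan (p * Real.sin (2 * π * x) / (p * Real.cos (2 * π * x) + (1 - p)))

lemma phB_pos {p : ℝ} (hp0 : 0 < p) (hp1 : p ≤ 0.1) (x : ℝ) :
    0 < p * Real.cos (2 * π * x) + (1 - p) := by
  have h := Real.neg_one_le_cos (2 * π * x)
  nlinarith

lemma phD2_pos {p c : ℝ} (hp0 : 0 < p) (hp1 : p ≤ 0.1) (hc : -1 ≤ c) :
    0 < p ^ 2 + (1 - p) ^ 2 + 2 * p * (1 - p) * c := by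
  nlinarith [mul_nonneg (mul_nonneg hp0.le (by linarith : (0:ℝ) ≤ 1 - p))
    (by linarith : (0:ℝ) ≤ 1 + c)]

lemma phF_hasDerivAt {p : ℝ} (hp0 : 0 < p) (hp1 : p ≤ 0.1) (x : ℝ) :
    HasDerivAt (phF p)
      (2 * π * p * (p + (1 - p) * Real.cos (2 * π * x)) /
        (p ^ 2 + (1 - p) ^ 2 + 2 * p * (1 - p) * Real.cos (2 * π * x))) x := by
  have hB0 : p * Real.cos (2 * π * x) + (1 - p) ≠ 0 := (phB_pos hp0 hp1 x).ne'
  have hθ : HasDerivAt (fun y : ℝ => 2 * π * y) (2 * π * 1) x := (hasDerivAt_id x).const_mul _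
  have hA : HasDerivAt (fun y : ℝ => p * Real.sin (2 * π * y))
      (p * (Real.cos (2 * π * x) * (2 * π * 1))) x :=
    ((Real.hasDerivAt_sin _).comp x hθ).const_mul p
  have hB : HasDerivAt (fun y : ℝ => p * Real.cos (2 * π * y) + (1 - p))
      (p * (-Real.sin (2 * π * x) * (2 * π * 1))) x :=
    (((Real.hasDerivAt_cos _).comp x hθ).const_mul p).add_const _
  have hr := hA.div hB hB0
  have hf := (Real.hasDerivAt_arctan _).comp x hr
  refine hf.congr_deriv ?_
  set s := Real.sin (2 * π * x) with hsd
  set c := Real.cos (2 * π * x) with hcd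
  have hs : s ^ 2 = 1 - c ^ 2 := by
    have := Real.sin_sq_add_cos_sq (2 * π * x); rw [← hsd, ← hcd] at this; linarith
  have hc1 : -1 ≤ c := hcd ▸ Real.neg_one_le_cos (2 * π * x)
  have hD2 : (0:ℝ) < p ^ 2 + (1 - p) ^ 2 + 2 * p * (1 - p) * c := phD2_pos hp0 hp1 hc1
  have hNum : p * (c * (2 * π * 1)) * (p * c + (1 - p)) - p * s * (p * (-s * (2 * π * 1)))
      = 2 * π * p * (p + (1 - p) * c) := by linear_combination 2 * π * p ^ 2 * hs
  have hB2 : 1 + (p * s / (p * c + (1 - p))) ^ 2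
      = (p ^ 2 + (1 - p) ^ 2 + 2 * p * (1 - p) * c) / (p * c + (1 - p)) ^ 2 := by
    field_simp
    linear_combination p ^ 2 * hs
  rw [hNum]
  simp only [Pi.div_apply, ← hsd, ← hcd]
  rw [hB2]
  field_simp

noncomputable def phG (p : ℝ) (x : ℝ) : ℝ :=
  2 * π * p * (p + (1 - p) * Real.cos (2 * π * x)) /
    (p ^ 2 + (1 - p) ^ 2 + 2 * p * (1 - p) * Real.cos (2 * π * x))

lemma phG_hasDerivAt_zero {p : ℝ} (hp0 : 0 < p) (hp1 : p ≤ 0.1) :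
    HasDerivAt (phG p) 0 0 := by
  have hθ : HasDerivAt (fun y : ℝ => 2 * π * y) (2 * π * 1) 0 := (hasDerivAt_id 0).const_mul _
  have hN : HasDerivAt (fun y : ℝ => 2 * π * p * (p + (1 - p) * Real.cos (2 * π * y)))
      (2 * π * p * ((1 - p) * (-Real.sin (2 * π * 0) * (2 * π * 1)))) 0 :=
    ((((Real.hasDerivAt_cos _).comp 0 hθ).const_mul (1 - p)).const_add p).const_mul (2 * π * p)
  have hD : HasDerivAt (fun y : ℝ =>
        p ^ 2 + (1 - p) ^ 2 + 2 * p * (1 - p) * Real.cos (2 * π * y))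
      (2 * p * (1 - p) * (-Real.sin (2 * π * 0) * (2 * π * 1))) 0 :=
    (((Real.hasDerivAt_cos _).comp 0 hθ).const_mul (2 * p * (1 - p))).const_add
      (p ^ 2 + (1 - p) ^ 2)
  have hD0 : p ^ 2 + (1 - p) ^ 2 + 2 * p * (1 - p) * Real.cos (2 * π * 0) ≠ 0 :=
    (phD2_pos hp0 hp1 (Real.neg_one_le_cos _)).ne'
  have h := hN.div hD hD0
  refine h.congr_deriv ?_
  simp

lemma phG_bound {p : ℝ} (hp0 : 0 < p) (hp1 : p ≤ 0.1) (x : ℝ) :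
    |phG p x - 2 * π * p| ≤ 9 / 2 * π ^ 3 * p * x ^ 2 := by
  set c := Real.cos (2 * π * x) with hcd
  have hc1 : -1 ≤ c := hcd ▸ Real.neg_one_le_cos _
  have hc2 : c ≤ 1 := hcd ▸ Real.cos_le_one _
  have hD2 : (0:ℝ) < p ^ 2 + (1 - p) ^ 2 + 2 * p * (1 - p) * c := phD2_pos hp0 hp1 hc1
  have hπ : (0:ℝ) < π := Real.pi_pos
  have h1 : 1 - c ≤ 2 * π ^ 2 * x ^ 2 := by
    have := Real.one_sub_sq_div_two_le_cos (x := 2 * π * x)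
    rw [← hcd] at this
    nlinarith
  have hid : phG p x - 2 * π * p
      = -(2 * π * p * ((1 - p) * ((1 - 2 * p) * (1 - c)))) /
        (p ^ 2 + (1 - p) ^ 2 + 2 * p * (1 - p) * c) := by
    rw [phG, ← hcd]
    field_simp
    ring
  have hnum : 0 ≤ 2 * π * p * ((1 - p) * ((1 - 2 * p) * (1 - c))) := by
    have e1 : (0:ℝ) ≤ 1 - p := by linarith
    have e2 : (0:ℝ) ≤ 1 - 2 * p := by linarith
    have e3 : (0:ℝ) ≤ 1 - c := by linarith
    exact mul_nonneg (by positivity) (mul_nonneg e1 (mul_nonneg e2 e3))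
  rw [hid, abs_div, abs_neg, abs_of_nonneg hnum, abs_of_pos hD2, div_le_iff₀ hD2]
  have hA1 : 2 * π * p * ((1 - p) * ((1 - 2 * p) * (1 - c)))
      ≤ 2 * π * p * ((1 - p) * ((1 - 2 * p) * (2 * π ^ 2 * x ^ 2))) := by
    have h10 : (0:ℝ) ≤ 2 * π * p * ((1 - p) * (1 - 2 * p)) := by
      have e1 : (0:ℝ) ≤ 1 - p := by linarith
      have e2 : (0:ℝ) ≤ 1 - 2 * p := by linarith
      exact mul_nonneg (by positivity) (mul_nonneg e1 e2)
    nlinarith [mul_le_mul_of_nonneg_left h1 h10]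
  have hA2 : 2 * π * p * ((1 - p) * ((1 - 2 * p) * (2 * π ^ 2 * x ^ 2)))
      ≤ 9 / 2 * π ^ 3 * p * x ^ 2 * (1 - 2 * p) ^ 2 := by
    have h10 : (0:ℝ) ≤ π ^ 3 * p * x ^ 2 * (1 - 2 * p) * (1 - 10 * p) := by
      have h2 : (0:ℝ) ≤ 1 - 2 * p := by linarith
      have h3 : (0:ℝ) ≤ 1 - 10 * p := by linarith
      positivity
    nlinarith
  have hA3 : 9 / 2 * π ^ 3 * p * x ^ 2 * (1 - 2 * p) ^ 2
      ≤ 9 / 2 * π ^ 3 * p * x ^ 2 * (p ^ 2 + (1 - p) ^ 2 + 2 * p * (1 - p) * c) := by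
    have h10 : (0:ℝ) ≤ 9 / 2 * π ^ 3 * p * x ^ 2 * (2 * p * (1 - p)) * (1 + c) := by
      have : (0:ℝ) ≤ 1 + c := by linarith
      have : (0:ℝ) ≤ 1 - p := by linarith
      positivity
    nlinarith
  linarith

lemma phF_zero (p : ℝ) : phF p 0 = 0 := by
  simp [phF]

lemma phG_sub_hasDerivAt {p : ℝ} (hp0 : 0 < p) (hp1 : p ≤ 0.1) (t : ℝ) :
    HasDerivAt (fun y => phF p y - 2 * π * p * y) (phG p t - 2 * π * p) t := by
  have h := (phF_hasDerivAt hp0 hp1 t).sub ((hasDerivAt_id t).const_mul (2 * π * p))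
  refine h.congr_deriv ?_
  rw [phG]; ring

lemma ph_mono₁ {p : ℝ} (hp0 : 0 < p) (hp1 : p ≤ 0.1) :
    Monotone (fun t : ℝ => 3 / 2 * π ^ 3 * p * t ^ 3 - (phF p t - 2 * π * p * t)) := by
  have hF : ∀ t : ℝ, HasDerivAt (fun t : ℝ => 3 / 2 * π ^ 3 * p * t ^ 3 - (phF p t - 2 * π * p * t))
      (3 / 2 * π ^ 3 * p * (3 * t ^ 2) - (phG p t - 2 * π * p)) t := fun t =>
    ((hasDerivAt_pow 3 t).const_mul (3 / 2 * π ^ 3 * p)).sub (phG_sub_hasDerivAt hp0 hp1 t)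
  refine monotone_of_deriv_nonneg (fun t => (hF t).differentiableAt) (fun t => ?_)
  rw [(hF t).deriv]
  have h := (abs_le.mp (phG_bound hp0 hp1 t)).2
  linarith

lemma ph_mono₂ {p : ℝ} (hp0 : 0 < p) (hp1 : p ≤ 0.1) :
    Monotone (fun t : ℝ => 3 / 2 * π ^ 3 * p * t ^ 3 + (phF p t - 2 * π * p * t)) := by
  have hF : ∀ t : ℝ, HasDerivAt (fun t : ℝ => 3 / 2 * π ^ 3 * p * t ^ 3 + (phF p t - 2 * π * p * t))
      (3 / 2 * π ^ 3 * p * (3 * t ^ 2) + (phG p t - 2 * π * p)) t := fun t =>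
    ((hasDerivAt_pow 3 t).const_mul (3 / 2 * π ^ 3 * p)).add (phG_sub_hasDerivAt hp0 hp1 t)
  refine monotone_of_deriv_nonneg (fun t => (hF t).differentiableAt) (fun t => ?_)
  rw [(hF t).deriv]
  have h := (abs_le.mp (phG_bound hp0 hp1 t)).1
  linarith

/-- For `0 < p ≤ 0.1`, the phase function
`f(x) = arctan (p sin (2πx) / (p cos (2πx) + (1−p)))` satisfies `f(0) = 0`,
`f'(0) = 2πp`, `f''(0) = 0`, and `|f(x) − 2πp x| ≤ 50 p |x|³` for all `x`. -/
theorem bernoulli_phase_taylor (p : ℝ) (hp0 : 0 < p) (hp1 : p ≤ 0.1) :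
    let f : ℝ → ℝ := fun x =>
      Real.arctan (p * Real.sin (2 * π * x) / (p * Real.cos (2 * π * x) + (1 - p)))
    f 0 = 0 ∧ deriv f 0 = 2 * π * p ∧ deriv (deriv f) 0 = 0 ∧
      ∀ x : ℝ, |f x - 2 * π * p * x| ≤ 50 * p * |x| ^ 3 := by
  intro f
  have hfe : f = phF p := rfl
  have hπ : (0:ℝ) < π := Real.pi_pos
  have hπ3 : (3:ℝ) / 2 * π ^ 3 ≤ 50 := by
    have hlt : π < 3.15 := Real.pi_lt_d2
    have h2 : π ^ 2 < 3.15 ^ 2 := by nlinarith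
    have h3 : π ^ 3 < 3.15 ^ 3 := by nlinarith
    nlinarith
  refine ⟨by rw [hfe]; exact phF_zero p, ?_, ?_, ?_⟩
  · rw [hfe, (phF_hasDerivAt hp0 hp1 0).deriv]
    rw [mul_zero, Real.cos_zero]
    rw [show p + (1 - p) * 1 = 1 by ring,
      show p ^ 2 + (1 - p) ^ 2 + 2 * p * (1 - p) * 1 = 1 by ring]
    simp
  · have hd : deriv f = phG p := by
      funext t
      rw [hfe, (phF_hasDerivAt hp0 hp1 t).deriv, phG]
    rw [hd, (phG_hasDerivAt_zero hp0 hp1).deriv]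
  · intro x
    have h0 : phF p 0 - 2 * π * p * 0 = 0 := by rw [phF_zero]; ring
    have hCp : 0 ≤ 3 / 2 * π ^ 3 * p := by positivity
    have hfin : |phF p x - 2 * π * p * x| ≤ 3 / 2 * π ^ 3 * p * |x| ^ 3 := by
      rcases le_or_gt 0 x with hx | hx
      · have m1 := ph_mono₁ hp0 hp1 hx
        have m2 := ph_mono₂ hp0 hp1 hx
        simp only [h0] at m1 m2
        rw [abs_le, abs_of_nonneg hx]
        constructor <;> [nlinarith; nlinarith]
      · have m1 := ph_mono₁ hp0 hp1 hx.le
        have m2 := ph_mono₂ hp0 hp1 hx.le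
        simp only [h0] at m1 m2
        rw [abs_le, abs_of_neg hx]
        constructor <;> [nlinarith; nlinarith]
    have : 3 / 2 * π ^ 3 * p * |x| ^ 3 ≤ 50 * p * |x| ^ 3 := by
      have h3 : (0:ℝ) ≤ |x| ^ 3 := by positivity
      nlinarith [mul_nonneg (mul_nonneg (by linarith : (0:ℝ) ≤ 50 - 3 / 2 * π ^ 3) hp0.le) h3]
    calc |f x - 2 * π * p * x| = |phF p x - 2 * π * p * x| := by rw [hfe]
      _ ≤ 3 / 2 * π ^ 3 * p * |x| ^ 3 := hfin
      _ ≤ 50 * p * |x| ^ 3 := this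
end
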